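/- arXiv:1810.01303 — 5 statements merged into one kernel-verified Lean document; each statement's English description precedes it below -/
import Mathlib

section
/- For every χ ∈ S_{n,q} one has | Σ_{f monic of degree n−1 in F_q[T]} χ(f) | = q^{(n−1)/2}; equivalently, the epsilon factor ε_χ = λ_{n−1}(χ) satisfies |ε_χ| = 1. -/
open Polynomial
open scoped Classical

set_option linter.unusedSectionVars false
set_option linter.unusedVariables false

noncomputable section

/-- The ring `F_q[x]/(x^(n+1))`. -/
abbrev QuotR (F : Type) [Field F] (n : ℕ) : Type :=
  Polynomial F ⧸ Ideal.span {(Polynomial.X : Polynomial F) ^ (n + 1)}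

/-- The quotient map `F_q[x] → F_q[x]/(x^(n+1))`. -/
def mkR (F : Type) [Field F] (n : ℕ) : Polynomial F →+* QuotR F n :=
  Ideal.Quotient.mk _

/-- A Dirichlet character modulo `x^(n+1)` is even if it is trivial on the constants. -/
def IsEvenChar (F : Type) [Field F] (n : ℕ) (ψ : MulChar (QuotR F n) ℂ) : Prop :=
  ∀ c : F, c ≠ 0 → ψ (mkR F n (Polynomial.C c)) = 1

/-- A Dirichlet character modulo `x^(n+1)` is primitive if it is nontrivial on the
units congruent to `1` modulo `x^n` (which are exactly the `1 + a x^n`). -/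
def IsPrimitiveChar (F : Type) [Field F] (n : ℕ) (ψ : MulChar (QuotR F n) ℂ) : Prop :=
  ∃ a : F, ψ (mkR F n (1 + Polynomial.C a * Polynomial.X ^ n)) ≠ 1

/-- The function `χ` on (monic) polynomials attached to a Dirichlet character `ψ`:
`χ(f) = ψ(f(x⁻¹) x^(deg f) mod x^(n+1))`. -/
def attachedChar (F : Type) [Field F] (n : ℕ) (ψ : MulChar (QuotR F n) ℂ) :
    Polynomial F → ℂ :=
  fun f => ψ (mkR F n f.reverse)

/-- The family `S_{n,q}` of functions attached to primitive even Dirichlet characters. -/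
def Snq (F : Type) [Field F] (n : ℕ) : Set (Polynomial F → ℂ) :=
  {χ | ∃ ψ : MulChar (QuotR F n) ℂ,
    IsEvenChar F n ψ ∧ IsPrimitiveChar F n ψ ∧ χ = attachedChar F n ψ}

/-- The sum of `χ(f)` over monic polynomials of degree `d`. -/
def coeffSum (F : Type) [Field F] (χ : Polynomial F → ℂ) (d : ℕ) : ℂ :=
  ∑ᶠ f ∈ {f : Polynomial F | f.Monic ∧ f.natDegree = d}, χ f

/-- `λ_d(χ) = q^(-d/2) ∑_{f monic, deg f = d} χ(f)`. -/
def lam (F : Type) [Field F] [Fintype F] (χ : Polynomial F → ℂ) (d : ℕ) : ℂ :=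
  ((((Fintype.card F : ℝ) ^ (-(d : ℝ) / 2) : ℝ)) : ℂ) * coeffSum F χ d

/-- The epsilon factor `ε_χ = λ_{n-1}(χ)`. -/
def epsFactor (F : Type) [Field F] [Fintype F] (n : ℕ) (χ : Polynomial F → ℂ) : ℂ :=
  lam F χ (n - 1)

/-- The L-function `L(s,χ) = ∑_{d=0}^{n-1} λ_d(χ) q^(d(1/2-s))`. -/
def Lfun (F : Type) [Field F] [Fintype F] (n : ℕ) (χ : Polynomial F → ℂ) (s : ℂ) : ℂ :=
  ∑ d ∈ Finset.range n, lam F χ d * (Fintype.card F : ℂ) ^ ((d : ℂ) * (1 / 2 - s))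

section Aux

variable {F : Type} [Field F] [Fintype F] {m : ℕ}

lemma coeff_sumC {k : ℕ} (w : Fin k → F) (j : ℕ) :
    (∑ i : Fin k, C (w i) * X ^ (i : ℕ)).coeff j = if h : j < k then w ⟨j, h⟩ else 0 := by
  rw [finset_sum_coeff]
  simp only [coeff_C_mul, coeff_X_pow, mul_ite, mul_one, mul_zero]
  by_cases h : j < k
  · rw [dif_pos h, Finset.sum_eq_single (⟨j, h⟩ : Fin k)]
    · simp
    · intro b _ hb
      rw [if_neg]
      intro hjb
      exact hb (Fin.ext hjb.symm)
    · simp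
  · rw [dif_neg h, Finset.sum_eq_zero]
    intro i _
    rw [if_neg]
    have := i.isLt
    omega

lemma mk_eq_mk {f g : Polynomial F} :
    mkR F (m + 1) f = mkR F (m + 1) g ↔ (X : Polynomial F) ^ (m + 2) ∣ f - g := by
  rw [mkR, Ideal.Quotient.mk_eq_mk_iff_sub_mem, Ideal.mem_span_singleton]

lemma mk_eq_zero {f : Polynomial F} :
    mkR F (m + 1) f = 0 ↔ (X : Polynomial F) ^ (m + 2) ∣ f := by
  rw [show (0 : QuotR F (m+1)) = mkR F (m+1) 0 from (map_zero _).symm, mk_eq_mk, sub_zero]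

def pOf (m : ℕ) (a : Fin (m + 2) → F) : Polynomial F :=
  ∑ i : Fin (m + 2), C (a i) * X ^ (i : ℕ)

lemma coeff_pOf (a : Fin (m + 2) → F) (j : ℕ) :
    (pOf m a).coeff j = if h : j < m + 2 then a ⟨j, h⟩ else 0 := coeff_sumC a j

def PP (m : ℕ) (a : Fin (m + 2) → F) : QuotR F (m + 1) := mkR F (m + 1) (pOf m a)

lemma pOf_add (a b : Fin (m + 2) → F) : pOf m (a + b) = pOf m a + pOf m b := by
  simp [pOf, Finset.sum_add_distrib, map_add, add_mul]

lemma PP_inj : Function.Injective (PP (F := F) m) := by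
  intro a b hab
  have h := mk_eq_mk.mp hab
  rw [Polynomial.X_pow_dvd_iff] at h
  funext i
  have := h i (by omega : (i : ℕ) < m + 2)
  rw [coeff_sub, coeff_pOf, coeff_pOf, dif_pos i.isLt, dif_pos i.isLt] at this
  have : a ⟨i, i.isLt⟩ - b ⟨i, i.isLt⟩ = 0 := this
  simpa [sub_eq_zero, Fin.eta] using this

lemma PP_surj : Function.Surjective (PP (F := F) m) := by
  intro r
  obtain ⟨f, rfl⟩ := Ideal.Quotient.mk_surjective r
  refine ⟨fun i => (f %ₘ X ^ (m + 2)).coeff i, ?_⟩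
  have hmonic : ((X : Polynomial F) ^ (m + 2)).Monic := monic_X_pow _
  have hdeg : (f %ₘ X ^ (m + 2)).degree < (m + 2 : ℕ) := by
    simpa [degree_X_pow] using degree_modByMonic_lt f hmonic
  have heq : pOf m (fun i => (f %ₘ X ^ (m + 2)).coeff i) = f %ₘ X ^ (m + 2) := by
    ext j
    rw [coeff_pOf]
    split
    · rfl
    · rename_i h
      symm
      exact coeff_eq_zero_of_degree_lt (lt_of_lt_of_le hdeg (by exact_mod_cast by omega))
  show mkR F (m+1) _ = Ideal.Quotient.mk _ f
  rw [heq]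
  have : mkR F (m+1) (f %ₘ X ^ (m+2)) = mkR F (m+1) f := by
    rw [mk_eq_mk]
    rw [modByMonic_eq_sub_mul_div f (X ^ (m + 2))]
    exact ⟨-(f /ₘ X ^ (m+2)), by ring⟩
  exact this

lemma PP_bij : Function.Bijective (PP (F := F) m) := ⟨PP_inj, PP_surj⟩

lemma last_coord {a : Fin (m + 2) → F} {f : Polynomial F} (h : PP m a = mkR F (m + 1) f) :
    a (Fin.last (m + 1)) = f.coeff (m + 1) := by
  have h' := mk_eq_mk.mp h
  rw [Polynomial.X_pow_dvd_iff] at h'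
  have := h' (m + 1) (by omega)
  rw [coeff_sub, coeff_pOf, dif_pos (by omega : m + 1 < m + 2)] at this
  have : a ⟨m + 1, by omega⟩ - f.coeff (m + 1) = 0 := this
  rw [sub_eq_zero] at this
  simpa [Fin.last] using this

end Aux


section Char

variable {F : Type} [Field F] [Fintype F] {m : ℕ}

instance : Nontrivial (QuotR F (m + 1)) := by
  refine Ideal.Quotient.nontrivial_iff.mpr ?_
  intro h
  have h1 : (1 : Polynomial F) ∈ Ideal.span {(X : Polynomial F) ^ (m + 1 + 1)} := h ▸ trivial
  rw [Ideal.mem_span_singleton] at h1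
  exact Polynomial.not_isUnit_X
    ((isUnit_pow_iff (by omega : m + 1 + 1 ≠ 0)).mp (isUnit_of_dvd_one h1))

instance : Finite (QuotR F (m + 1)) := Finite.of_surjective (PP m) PP_surj

/-- The additive-character-like function `t ↦ ψ(1 + t x^(m+1))`. -/
def ee (ψ : MulChar (QuotR F (m + 1)) ℂ) : F → ℂ :=
  fun t => ψ (mkR F (m + 1) (1 + C t * X ^ (m + 1)))

variable (ψ : MulChar (QuotR F (m + 1)) ℂ)

lemma ee_add (s t : F) : ee ψ (s + t) = ee ψ s * ee ψ t := by
  rw [ee, ee, ee, ← map_mul, ← map_mul]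
  congr 1
  symm
  apply mk_eq_mk.2
  exact ⟨C s * C t * X ^ m, by rw [C_add]; ring⟩

lemma ee_zero : ee ψ 0 = 1 := by
  simp only [ee, map_zero, zero_mul, add_zero, map_one]

lemma psi_mul_conj (u : QuotR F (m + 1)) (hu : IsUnit u) :
    ψ u * (starRingEnd ℂ) (ψ u) = 1 := by
  obtain ⟨v, rfl⟩ := hu
  have hfin : Finite (QuotR F (m + 1))ˣ := inferInstance
  have hord : v ^ orderOf v = 1 := pow_orderOf_eq_one v
  have hpos : 0 < orderOf v := orderOf_pos v
  have hpow : ψ (v : QuotR F (m + 1)) ^ orderOf v = 1 := by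
    rw [← map_pow, ← Units.val_pow_eq_pow_val, hord, Units.val_one, map_one]
  have habs : ‖ψ (v : QuotR F (m + 1))‖ = 1 := by
    have h1 : ‖ψ (v : QuotR F (m + 1))‖ ^ orderOf v = 1 := by
      rw [← norm_pow, hpow, norm_one]
    have h0 : (0:ℝ) ≤ ‖ψ (v : QuotR F (m + 1))‖ := norm_nonneg _
    rcases lt_trichotomy (‖ψ (v : QuotR F (m + 1))‖) 1 with h | h | h
    · have := pow_lt_one₀ h0 h hpos.ne'
      linarith
    · exact h
    · have := one_lt_pow₀ h hpos.ne'
      linarith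
  rw [Complex.mul_conj, Complex.normSq_eq_norm_sq, habs]
  norm_num

end Char

section Char2

variable {F : Type} [Field F] [Fintype F] {m : ℕ}

/-- The inner polynomial `∑ i < k, w i X^i`. -/
def sC {k : ℕ} (w : Fin k → F) : Polynomial F := ∑ i : Fin k, C (w i) * X ^ (i : ℕ)

lemma pOf_cons (c : F) (v : Fin (m + 1) → F) :
    pOf m (Fin.cons c v) = C c + X * sC v := by
  rw [pOf, Fin.sum_univ_succ, sC, Finset.mul_sum]
  simp only [Fin.cons_zero, Fin.cons_succ, Fin.val_zero, pow_zero, mul_one, Fin.val_succ]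
  congr 1
  refine Finset.sum_congr rfl fun i _ => ?_
  rw [pow_succ]
  ring

lemma sC_snoc (w : Fin m → F) (t : F) :
    sC (Fin.snoc w t) = sC w + C t * X ^ m := by
  rw [sC, Fin.sum_univ_castSucc]
  simp [sC, Fin.snoc_castSucc]

lemma nilpotent_mk_X_mul (g : Polynomial F) :
    IsNilpotent (mkR F (m + 1) (X * g)) := by
  refine ⟨m + 2, ?_⟩
  rw [← map_pow, mk_eq_zero]
  exact ⟨g ^ (m + 2), by ring⟩

variable (ψ : MulChar (QuotR F (m + 1)) ℂ)

lemma isUnit_one_add_X_mul (g : Polynomial F) :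
    IsUnit (mkR F (m + 1) (1 + X * g)) := by
  rw [map_add, map_one]
  exact (nilpotent_mk_X_mul g).isUnit_one_add

lemma psi_cons_zero (v : Fin (m + 1) → F) : ψ (PP m (Fin.cons 0 v)) = 0 := by
  apply MulChar.map_nonunit
  rw [PP, pOf_cons, map_zero, zero_add]
  exact fun hu => (nilpotent_mk_X_mul (sC v)).not_isUnit hu

lemma C_mul_sC (c : F) {k : ℕ} (v : Fin k → F) : C c * sC v = sC (c • v) := by
  rw [sC, sC, Finset.mul_sum]
  refine Finset.sum_congr rfl fun i _ => ?_
  rw [← mul_assoc, ← C_mul]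
  rfl

lemma PP_cons_factor {c : F} (hc : c ≠ 0) (v : Fin (m + 1) → F) :
    PP m (Fin.cons c v) = mkR F (m + 1) (C c) * PP m (Fin.cons 1 (c⁻¹ • v)) := by
  rw [PP, PP, ← map_mul]
  congr 1
  rw [pOf_cons, pOf_cons, C_1, mul_add, mul_one, mul_left_comm, C_mul_sC,
    smul_smul, mul_inv_cancel₀ hc, one_smul]

lemma isUnit_PP_cons {c : F} (hc : c ≠ 0) (v : Fin (m + 1) → F) :
    IsUnit (PP m (Fin.cons c v)) := by
  rw [PP_cons_factor hc v]
  refine IsUnit.mul ?_ ?_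
  · exact (Polynomial.isUnit_C.mpr (isUnit_iff_ne_zero.mpr hc)).map (mkR F (m + 1))
  · rw [PP, pOf_cons, C_1]
    exact isUnit_one_add_X_mul _

end Char2

section Char3

variable {F : Type} [Field F] [Fintype F] {m : ℕ}
variable (ψ : MulChar (QuotR F (m + 1)) ℂ)

lemma psi_cons_one_snoc (w : Fin m → F) (t : F) :
    ψ (PP m (Fin.cons 1 (Fin.snoc w t))) =
      ψ (mkR F (m + 1) (1 + X * sC w)) * ee ψ t := by
  simp only [PP, pOf_cons, C_1, sC_snoc, ee]
  rw [← map_mul ψ, ← map_mul (mkR F (m + 1))]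
  congr 1
  apply mk_eq_mk.2
  exact ⟨-(C t * sC w), by ring⟩

lemma isUnit_ee_elt (t : F) : IsUnit (mkR F (m + 1) (1 + C t * X ^ (m + 1))) := by
  have h : (1 + C t * X ^ (m + 1) : Polynomial F) = 1 + X * (C t * X ^ m) := by ring
  rw [h]
  exact isUnit_one_add_X_mul _

lemma ee_mul_conj (t : F) : ee ψ t * (starRingEnd ℂ) (ee ψ t) = 1 :=
  psi_mul_conj ψ _ (isUnit_ee_elt t)

lemma ee_ne_zero (t : F) : ee ψ t ≠ 0 := by
  intro h
  have := ee_mul_conj ψ t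
  rw [h, zero_mul] at this
  exact zero_ne_one this

lemma conj_ee (t : F) : (starRingEnd ℂ) (ee ψ t) = ee ψ (-t) := by
  have h1 : ee ψ t * ee ψ (-t) = 1 := by
    rw [← ee_add, add_neg_cancel, ee_zero]
  exact mul_left_cancel₀ (ee_ne_zero ψ t) ((ee_mul_conj ψ t).trans h1.symm)

lemma sum_ee (hP : IsPrimitiveChar F (m + 1) ψ) : ∑ t : F, ee ψ t = 0 := by
  obtain ⟨a, ha⟩ := hP
  have ha' : ee ψ a ≠ 1 := ha
  have h : ee ψ a * ∑ t : F, ee ψ t = ∑ t : F, ee ψ t := by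
    rw [Finset.mul_sum]
    simp_rw [← ee_add]
    exact Fintype.sum_equiv (Equiv.addLeft a) _ _ (fun t => rfl)
  have h2 : (ee ψ a - 1) * ∑ t : F, ee ψ t = 0 := by
    rw [sub_mul, one_mul, h, sub_self]
  rcases mul_eq_zero.mp h2 with h3 | h3
  · exact absurd (sub_eq_zero.mp h3) ha'
  · exact h3

lemma sum_ee_mul (hP : IsPrimitiveChar F (m + 1) ψ) (x : F) :
    ∑ t : F, ee ψ (x * t) = if x = 0 then (Fintype.card F : ℂ) else 0 := by
  by_cases hx : x = 0
  · subst hx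
    simp [ee_zero]
  · rw [if_neg hx, ← sum_ee ψ hP]
    exact Fintype.sum_bijective _ (mulLeft_bijective₀ x hx) _ _ (fun t => rfl)

end Char3

section Sums

variable {F : Type} [Field F] [Fintype F] {m : ℕ}

lemma sum_cons_split {k : ℕ} (f : (Fin (k + 1) → F) → ℂ) :
    ∑ a : Fin (k + 1) → F, f a = ∑ c : F, ∑ v : Fin k → F, f (Fin.cons c v) := by
  rw [← Equiv.sum_comp (Fin.consEquiv (fun _ : Fin (k + 1) => F)) f, Fintype.sum_prod_type]
  rfl

lemma sum_snoc_split {k : ℕ} (f : (Fin (k + 1) → F) → ℂ) :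
    ∑ a : Fin (k + 1) → F, f a = ∑ t : F, ∑ w : Fin k → F, f (Fin.snoc w t) := by
  rw [← Equiv.sum_comp (Fin.snocEquiv (fun _ : Fin (k + 1) => F)) f, Fintype.sum_prod_type]
  rfl

lemma smul_bijective {k : ℕ} {c : F} (hc : c ≠ 0) :
    Function.Bijective (fun v : Fin k → F => c • v) := by
  refine Function.bijective_iff_has_inverse.mpr ⟨fun v => c⁻¹ • v, fun v => ?_, fun v => ?_⟩
  · simp [smul_smul, inv_mul_cancel₀ hc]
  · simp [smul_smul, mul_inv_cancel₀ hc]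

variable (ψ : MulChar (QuotR F (m + 1)) ℂ)

/-- the global Gauss-type sum -/
def WW (ψ : MulChar (QuotR F (m + 1)) ℂ) : ℂ :=
  ∑ a : Fin (m + 2) → F, ψ (PP m a) * (starRingEnd ℂ) (ee ψ (a (Fin.last (m + 1))))

/-- the epsilon-factor sum -/
def SS (ψ : MulChar (QuotR F (m + 1)) ℂ) : ℂ :=
  ∑ w : Fin m → F, ψ (mkR F (m + 1) (1 + X * sC w))

lemma cons_last (c : F) (v : Fin (m + 1) → F) :
    (Fin.cons c v : Fin (m + 2) → F) (Fin.last (m + 1)) = v (Fin.last m) := by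
  rw [← Fin.succ_last, Fin.cons_succ]

lemma claimA (hE : IsEvenChar F (m + 1) ψ) (hP : IsPrimitiveChar F (m + 1) ψ) :
    WW ψ = (Fintype.card F : ℂ) * SS ψ := by
  rw [WW, sum_cons_split]
  have step : ∀ c : F,
      (∑ v : Fin (m + 1) → F,
        ψ (PP m (Fin.cons c v)) *
          (starRingEnd ℂ) (ee ψ ((Fin.cons c v : Fin (m + 2) → F) (Fin.last (m + 1)))))
      = if c = 1 then (Fintype.card F : ℂ) * SS ψ else 0 := by
    intro c
    by_cases hc : c = 0
    · subst hc
      rw [if_neg (by exact fun h => one_ne_zero h.symm)]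
      simp only [psi_cons_zero, zero_mul]
      exact Finset.sum_const_zero
    · have h1 : ∀ v : Fin (m + 1) → F,
          ψ (PP m (Fin.cons c v)) *
            (starRingEnd ℂ) (ee ψ ((Fin.cons c v : Fin (m + 2) → F) (Fin.last (m + 1))))
          = ψ (PP m (Fin.cons 1 (c⁻¹ • v))) * (starRingEnd ℂ) (ee ψ (v (Fin.last m))) := by
        intro v
        rw [cons_last, PP_cons_factor hc, map_mul, hE c hc, one_mul]
      rw [Finset.sum_congr rfl (fun v _ => h1 v)]
      have h2 : (∑ v : Fin (m + 1) → F,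
          ψ (PP m (Fin.cons 1 (c⁻¹ • v))) * (starRingEnd ℂ) (ee ψ (v (Fin.last m))))
          = ∑ v : Fin (m + 1) → F,
          ψ (PP m (Fin.cons 1 v)) * (starRingEnd ℂ) (ee ψ (c * v (Fin.last m))) := by
        refine (Fintype.sum_bijective _ (smul_bijective hc) _ _ fun v => ?_).symm
        simp only [smul_smul, inv_mul_cancel₀ hc, one_smul, Pi.smul_apply, smul_eq_mul]
      rw [h2, sum_snoc_split (fun v => ψ (PP m (Fin.cons 1 v)) *
        (starRingEnd ℂ) (ee ψ (c * v (Fin.last m))))]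
      have h3 : ∀ (t : F) (w : Fin m → F),
          ψ (PP m (Fin.cons 1 (Fin.snoc w t))) *
            (starRingEnd ℂ) (ee ψ (c * (Fin.snoc w t : Fin (m + 1) → F) (Fin.last m)))
          = ψ (mkR F (m + 1) (1 + X * sC w)) * ee ψ ((1 - c) * t) := by
        intro t w
        rw [Fin.snoc_last, psi_cons_one_snoc, conj_ee, mul_assoc, ← ee_add]
        ring_nf
      simp only [h3]
      calc ∑ t : F, ∑ w : Fin m → F, ψ ((mkR F (m + 1)) (1 + X * sC w)) * ee ψ ((1 - c) * t)
          = ∑ t : F, SS ψ * ee ψ ((1 - c) * t) := by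
            refine Finset.sum_congr rfl fun t _ => ?_
            rw [SS, Finset.sum_mul]
        _ = SS ψ * ∑ t : F, ee ψ ((1 - c) * t) := by rw [Finset.mul_sum]
        _ = if c = 1 then (Fintype.card F : ℂ) * SS ψ else 0 := by
            rw [sum_ee_mul ψ hP]
            by_cases h : c = 1
            · rw [if_pos (by rw [h, sub_self]), if_pos h, mul_comm]
            · rw [if_neg (fun hh => h (sub_eq_zero.mp hh).symm), if_neg h, mul_zero]
  rw [Finset.sum_congr rfl (fun c _ => step c), Finset.sum_ite_eq' Finset.univ (1 : F)
    (fun _ => (Fintype.card F : ℂ) * SS ψ)]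
  simp

end Sums

section ClaimB1

variable {F : Type} [Field F] [Fintype F] {m : ℕ}

lemma coeff_prod_pOf (a b : Fin (m + 2) → F) :
    (pOf m a * pOf m b).coeff (m + 1) = ∑ i : Fin (m + 2), a i * b (Fin.rev i) := by
  rw [coeff_mul, Finset.Nat.sum_antidiagonal_eq_sum_range_succ_mk,
    ← Fin.sum_univ_eq_sum_range (fun k => (pOf m a).coeff k * (pOf m b).coeff (m + 1 - k))]
  refine Finset.sum_congr rfl fun i _ => ?_
  rw [coeff_pOf, coeff_pOf, dif_pos i.isLt, dif_pos (by omega : m + 1 - (i : ℕ) < m + 2)]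
  have h2 : (⟨m + 1 - (i : ℕ), by omega⟩ : Fin (m + 2)) = i.rev := by
    ext
    simp only [Fin.val_rev]
    omega
  rw [Fin.eta i i.isLt, h2]

lemma pair_form (b a' : Fin (m + 2) → F) :
    b (Fin.last (m + 1)) - ∑ i : Fin (m + 2), b i * a' (Fin.rev i)
      = ∑ i : Fin (m + 2),
          ((if i = Fin.last (m + 1) then (1 : F) else 0) - a' (Fin.rev i)) * b i := by
  have h : ∀ i : Fin (m + 2),
      ((if i = Fin.last (m + 1) then (1 : F) else 0) - a' (Fin.rev i)) * b i
      = (if i = Fin.last (m + 1) then b i else 0) - b i * a' (Fin.rev i) := by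
    intro i
    split <;> ring
  rw [Finset.sum_congr rfl fun i _ => h i, Finset.sum_sub_distrib,
    Finset.sum_ite_eq' Finset.univ (Fin.last (m + 1)) b]
  simp

variable (ψ : MulChar (QuotR F (m + 1)) ℂ)

lemma ee_finset_sum {ι : Type} (s : Finset ι) (g : ι → F) :
    ee ψ (∑ i ∈ s, g i) = ∏ i ∈ s, ee ψ (g i) := by
  induction s using Finset.cons_induction with
  | empty => simp [ee_zero]
  | cons a s ha ih => rw [Finset.sum_cons, Finset.prod_cons, ee_add, ih]

lemma prodIndicatorIf {k : ℕ} (c : Fin k → F) :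
    ∏ i : Fin k, (if c i = 0 then (Fintype.card F : ℂ) else 0)
      = if c = 0 then (Fintype.card F : ℂ) ^ k else 0 := by
  by_cases hc : c = 0
  · subst hc
    simp
  · rw [if_neg hc]
    obtain ⟨j, hj⟩ := Function.ne_iff.mp hc
    exact Finset.prod_eq_zero (Finset.mem_univ j) (if_neg hj)

/-- the vector representing `1`. -/
def vOne (m : ℕ) : Fin (m + 2) → F := Fin.cons 1 0

lemma vOne_apply (j : Fin (m + 2)) : vOne m j = if j = 0 then (1 : F) else 0 := by
  induction j using Fin.cases with
  | zero => simp [vOne]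
  | succ i => simp [vOne, Fin.succ_ne_zero]

lemma PP_vOne : PP m (vOne m (F := F)) = 1 := by
  rw [PP, vOne, pOf_cons, C_1]
  have : sC (0 : Fin (m + 1) → F) = 0 := by simp [sC]
  rw [this, mul_zero, add_zero, map_one]

/-- the vector representing `1 + t x^(m+1)`. -/
def vT (m : ℕ) (t : F) : Fin (m + 2) → F := Fin.cons 1 (Fin.snoc 0 t)

lemma psi_vT (t : F) : ψ (PP m (vT m t)) = ee ψ t := by
  rw [vT, psi_cons_one_snoc]
  have : sC (0 : Fin m → F) = 0 := by simp [sC]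
  rw [this, mul_zero, add_zero, map_one, MulChar.map_one, one_mul]

end ClaimB1

section ClaimB2

variable {F : Type} [Field F] [Fintype F] {m : ℕ}
variable (ψ : MulChar (QuotR F (m + 1)) ℂ)

lemma pair_form' {k : ℕ} (b g : Fin (k + 1) → F) :
    b (Fin.last k) - ∑ i : Fin (k + 1), b i * g i
      = ∑ i : Fin (k + 1), ((if i = Fin.last k then (1 : F) else 0) - g i) * b i := by
  have h : ∀ i : Fin (k + 1),
      ((if i = Fin.last k then (1 : F) else 0) - g i) * b i
      = (if i = Fin.last k then b i else 0) - b i * g i := by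
    intro i
    split <;> ring
  rw [Finset.sum_congr rfl fun i _ => h i, Finset.sum_sub_distrib,
    Finset.sum_ite_eq' Finset.univ (Fin.last k) b]
  simp

lemma sum_linform (hP : IsPrimitiveChar F (m + 1) ψ) {k : ℕ} (c : Fin k → F) :
    ∑ b : Fin k → F, ee ψ (∑ i : Fin k, c i * b i)
      = if c = 0 then (Fintype.card F : ℂ) ^ k else 0 := by
  simp only [ee_finset_sum]
  rw [← Fintype.prod_sum (fun (i : Fin k) (t : F) => ee ψ (c i * t))]
  rw [Finset.prod_congr rfl fun i _ => sum_ee_mul ψ hP (c i)]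
  exact prodIndicatorIf c

lemma rev_zero' : (Fin.rev (0 : Fin (m + 2))) = Fin.last (m + 1) := by
  rw [← Fin.rev_last, Fin.rev_rev]

lemma cond_full (a' : Fin (m + 2) → F) :
    ((fun i => (if i = Fin.last (m + 1) then (1 : F) else 0) - a' (Fin.rev i)) = 0)
      ↔ a' = vOne m := by
  constructor
  · intro h
    funext j
    have h1 := congrFun h (Fin.rev j)
    rw [Pi.zero_apply, sub_eq_zero, Fin.rev_rev] at h1
    rw [← h1, vOne_apply]
    by_cases hj : j = 0
    · rw [if_pos (by rw [hj]; exact rev_zero'), if_pos hj]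
    · rw [if_neg (fun hh => hj (by rw [Fin.rev_eq_iff, Fin.rev_last] at hh; exact hh)),
        if_neg hj]
  · rintro rfl
    funext i
    rw [Pi.zero_apply, sub_eq_zero, vOne_apply]
    by_cases hi : i = Fin.last (m + 1)
    · rw [if_pos hi, if_pos (by rw [hi, Fin.rev_last])]
    · rw [if_neg hi, if_neg (fun hh => hi (by rw [Fin.rev_eq_iff, rev_zero'] at hh; exact hh))]

/-- the length-`m+1` delta vector. -/
def dOne (m : ℕ) : Fin (m + 1) → F := fun j => if j = 0 then 1 else 0

lemma rev_zero'' : (Fin.rev (0 : Fin (m + 1))) = Fin.last m := by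
  rw [← Fin.rev_last, Fin.rev_rev]

lemma cond_constrained (a' : Fin (m + 2) → F) :
    ((fun j : Fin (m + 1) =>
        (if j = Fin.last m then (1 : F) else 0) - a' (Fin.rev (Fin.succ j))) = 0)
      ↔ (fun j : Fin (m + 1) => a' (Fin.castSucc j)) = dOne m := by
  have key : ∀ j : Fin (m + 1), Fin.rev (Fin.succ j) = Fin.castSucc (Fin.rev j) :=
    fun j => Fin.rev_succ j
  constructor
  · intro h
    funext j
    have h1 := congrFun h (Fin.rev j)
    rw [Pi.zero_apply, sub_eq_zero, key, Fin.rev_rev] at h1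
    rw [← h1, dOne]
    by_cases hj : j = 0
    · rw [if_pos (by rw [hj]; exact rev_zero''), if_pos hj]
    · rw [if_neg (fun hh => hj (by rw [Fin.rev_eq_iff, Fin.rev_last] at hh; exact hh)),
        if_neg hj]
  · intro h
    funext j
    have h1 := congrFun h (Fin.rev j)
    rw [Pi.zero_apply, sub_eq_zero, key, h1, dOne]
    by_cases hj : j = Fin.last m
    · rw [if_pos hj, if_pos (by rw [hj, Fin.rev_last])]
    · rw [if_neg hj, if_neg (fun hh => hj (by rw [Fin.rev_eq_iff, rev_zero''] at hh; exact hh))]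

lemma snoc_dOne (t : F) : (Fin.snoc (dOne m) t : Fin (m + 2) → F) = vT m t := by
  funext i
  induction i using Fin.lastCases with
  | last => rw [Fin.snoc_last, vT, ← Fin.succ_last, Fin.cons_succ, Fin.snoc_last]
  | cast j =>
    rw [Fin.snoc_castSucc, dOne, vT]
    induction j using Fin.cases with
    | zero => simp
    | succ j' =>
      rw [if_neg (Fin.succ_ne_zero j'), ← Fin.succ_castSucc, Fin.cons_succ,
        Fin.snoc_castSucc, Pi.zero_apply]

end ClaimB2

section ClaimB3

variable {F : Type} [Field F] [Fintype F] {m : ℕ}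
variable (ψ : MulChar (QuotR F (m + 1)) ℂ)

lemma psi_b_zero {b : Fin (m + 2) → F} (hb : b 0 = 0) : ψ (PP m b) = 0 := by
  have h : b = Fin.cons (0 : F) (Fin.tail b) := by
    rw [← hb, Fin.cons_self_tail]
  rw [h]
  exact psi_cons_zero ψ _

lemma isUnit_PP {b : Fin (m + 2) → F} (hb : b 0 ≠ 0) : IsUnit (PP m b) := by
  have h : b = Fin.cons (b 0) (Fin.tail b) := (Fin.cons_self_tail b).symm
  rw [h]
  exact isUnit_PP_cons hb _

lemma subst_unit {b : Fin (m + 2) → F} (hu : IsUnit (PP m b)) :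
    ((starRingEnd ℂ) (ψ (PP m b)) * ee ψ (b (Fin.last (m + 1)))) * WW ψ
      = ∑ a' : Fin (m + 2) → F,
          ψ (PP m a') *
            ee ψ (b (Fin.last (m + 1)) - ∑ i : Fin (m + 2), b i * a' (Fin.rev i)) := by
  classical
  set EPP : (Fin (m + 2) → F) ≃ QuotR F (m + 1) :=
    Equiv.ofBijective _ (PP_bij (F := F) (m := m)) with hEPP
  set e : (Fin (m + 2) → F) ≃ (Fin (m + 2) → F) :=
    EPP.trans ((Units.mulLeft hu.unit).trans EPP.symm) with he
  have hPPe : ∀ a', PP m (e a') = PP m b * PP m a' := by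
    intro a'
    have : PP m (e a') = EPP (e a') := rfl
    rw [this, he]
    simp only [Equiv.trans_apply, Equiv.apply_symm_apply, Units.mulLeft_apply]
    rw [IsUnit.unit_spec]
    rfl
  have hlast : ∀ a', (e a') (Fin.last (m + 1)) = (pOf m b * pOf m a').coeff (m + 1) := by
    intro a'
    refine last_coord ?_
    rw [hPPe a', PP, PP, ← map_mul]
  have hW : WW ψ = ∑ a' : Fin (m + 2) → F,
      ψ (PP m (e a')) * (starRingEnd ℂ) (ee ψ ((e a') (Fin.last (m + 1)))) := by
    rw [WW]
    exact (Equiv.sum_comp e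
      (fun a => ψ (PP m a) * (starRingEnd ℂ) (ee ψ (a (Fin.last (m + 1)))))).symm
  rw [hW, Finset.mul_sum]
  refine Finset.sum_congr rfl fun a' _ => ?_
  rw [hPPe, hlast, map_mul ψ, coeff_prod_pOf, conj_ee]
  have h1 : (starRingEnd ℂ) (ψ (PP m b)) * ψ (PP m b) = 1 := by
    rw [mul_comm]
    exact psi_mul_conj ψ _ hu
  set S := ∑ i : Fin (m + 2), b i * a' (Fin.rev i) with hS
  calc ((starRingEnd ℂ) (ψ (PP m b)) * ee ψ (b (Fin.last (m + 1)))) *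
        (ψ (PP m b) * ψ (PP m a') * ee ψ (-S))
      = ((starRingEnd ℂ) (ψ (PP m b)) * ψ (PP m b)) *
        (ψ (PP m a') * (ee ψ (b (Fin.last (m + 1))) * ee ψ (-S))) := by ring
    _ = ψ (PP m a') * ee ψ (b (Fin.last (m + 1)) - S) := by
        rw [h1, one_mul, ← ee_add, ← sub_eq_add_neg]

end ClaimB3

section ClaimB4

variable {F : Type} [Field F] [Fintype F] {m : ℕ}
variable (ψ : MulChar (QuotR F (m + 1)) ℂ)

lemma sum_b_full (hP : IsPrimitiveChar F (m + 1) ψ) (a' : Fin (m + 2) → F) :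
    ∑ b : Fin (m + 2) → F,
        ee ψ (b (Fin.last (m + 1)) - ∑ i : Fin (m + 2), b i * a' (Fin.rev i))
      = if a' = vOne m then (Fintype.card F : ℂ) ^ (m + 2) else 0 := by
  have h : ∀ b : Fin (m + 2) → F,
      b (Fin.last (m + 1)) - ∑ i : Fin (m + 2), b i * a' (Fin.rev i)
        = ∑ i : Fin (m + 2),
            ((if i = Fin.last (m + 1) then (1 : F) else 0) - a' (Fin.rev i)) * b i :=
    fun b => pair_form' b (fun i => a' (Fin.rev i))
  rw [Finset.sum_congr rfl fun b _ => congrArg (ee ψ) (h b), sum_linform ψ hP]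
  simp only [cond_full]

lemma sum_b_constr (hP : IsPrimitiveChar F (m + 1) ψ) (a' : Fin (m + 2) → F) :
    ∑ u : Fin (m + 1) → F,
        ee ψ ((Fin.cons 0 u : Fin (m + 2) → F) (Fin.last (m + 1))
          - ∑ i : Fin (m + 2), (Fin.cons 0 u : Fin (m + 2) → F) i * a' (Fin.rev i))
      = if (fun j : Fin (m + 1) => a' (Fin.castSucc j)) = dOne m
        then (Fintype.card F : ℂ) ^ (m + 1) else 0 := by
  have h : ∀ u : Fin (m + 1) → F,
      (Fin.cons 0 u : Fin (m + 2) → F) (Fin.last (m + 1))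
          - ∑ i : Fin (m + 2), (Fin.cons 0 u : Fin (m + 2) → F) i * a' (Fin.rev i)
        = ∑ j : Fin (m + 1),
            ((if j = Fin.last m then (1 : F) else 0) - a' (Fin.rev (Fin.succ j))) * u j := by
    intro u
    rw [cons_last, Fin.sum_univ_succ, Fin.cons_zero, zero_mul, zero_add]
    simp only [Fin.cons_succ]
    exact pair_form' u (fun j => a' (Fin.rev (Fin.succ j)))
  rw [Finset.sum_congr rfl fun u _ => congrArg (ee ψ) (h u), sum_linform ψ hP]
  simp only [cond_constrained]

lemma claimB (hP : IsPrimitiveChar F (m + 1) ψ) :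
    WW ψ * (starRingEnd ℂ) (WW ψ) = (Fintype.card F : ℂ) ^ (m + 2) := by
  classical
  set T : (Fin (m + 2) → F) → ℂ := fun b =>
    ∑ a' : Fin (m + 2) → F,
      ψ (PP m a') *
        ee ψ (b (Fin.last (m + 1)) - ∑ i : Fin (m + 2), b i * a' (Fin.rev i)) with hT
  have hconj : (starRingEnd ℂ) (WW ψ)
      = ∑ b : Fin (m + 2) → F,
          (starRingEnd ℂ) (ψ (PP m b)) * ee ψ (b (Fin.last (m + 1))) := by
    rw [WW, map_sum]
    refine Finset.sum_congr rfl fun b _ => ?_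
    rw [map_mul]
    congr 1
    exact Complex.conj_conj _
  rw [mul_comm, hconj, Finset.sum_mul]
  have hb : ∀ b : Fin (m + 2) → F,
      ((starRingEnd ℂ) (ψ (PP m b)) * ee ψ (b (Fin.last (m + 1)))) * WW ψ
      = T b - (if b 0 = 0 then T b else 0) := by
    intro b
    by_cases hb0 : b 0 = 0
    · rw [if_pos hb0, sub_self, psi_b_zero ψ hb0, map_zero, zero_mul, zero_mul]
    · rw [if_neg hb0, sub_zero, subst_unit ψ (isUnit_PP hb0)]
  rw [Finset.sum_congr rfl fun b _ => hb b, Finset.sum_sub_distrib]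
  have hA : ∑ b : Fin (m + 2) → F, T b = (Fintype.card F : ℂ) ^ (m + 2) := by
    rw [hT]
    rw [Finset.sum_comm]
    have : ∀ a' : Fin (m + 2) → F,
        (∑ b : Fin (m + 2) → F, ψ (PP m a') *
          ee ψ (b (Fin.last (m + 1)) - ∑ i : Fin (m + 2), b i * a' (Fin.rev i)))
        = if a' = vOne m then ψ (PP m a') * (Fintype.card F : ℂ) ^ (m + 2) else 0 := by
      intro a'
      rw [← Finset.mul_sum, sum_b_full ψ hP a']
      split
      · rfl
      · rw [mul_zero]
    rw [Finset.sum_congr rfl fun a' _ => this a',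
      Finset.sum_ite_eq' Finset.univ (vOne m)
        (fun a' => ψ (PP m a') * (Fintype.card F : ℂ) ^ (m + 2)),
      if_pos (Finset.mem_univ _), PP_vOne, MulChar.map_one, one_mul]
  have hB : ∑ b : Fin (m + 2) → F, (if b 0 = 0 then T b else 0) = 0 := by
    rw [sum_cons_split (fun b => if b 0 = 0 then T b else 0)]
    have h1 : ∀ c : F, ∑ u : Fin (m + 1) → F,
        (if (Fin.cons c u : Fin (m + 2) → F) 0 = 0 then T (Fin.cons c u) else 0)
        = if c = 0 then ∑ u : Fin (m + 1) → F, T (Fin.cons c u) else 0 := by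
      intro c
      simp only [Fin.cons_zero]
      split
      · rfl
      · exact Finset.sum_const_zero
    rw [Finset.sum_congr rfl fun c _ => h1 c,
      Finset.sum_ite_eq' Finset.univ (0 : F)
        (fun c => ∑ u : Fin (m + 1) → F, T (Fin.cons c u)),
      if_pos (Finset.mem_univ _)]
    rw [hT, Finset.sum_comm]
    have h2 : ∀ a' : Fin (m + 2) → F,
        (∑ u : Fin (m + 1) → F, ψ (PP m a') *
          ee ψ ((Fin.cons 0 u : Fin (m + 2) → F) (Fin.last (m + 1))
            - ∑ i : Fin (m + 2), (Fin.cons 0 u : Fin (m + 2) → F) i * a' (Fin.rev i)))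
        = if (fun j : Fin (m + 1) => a' (Fin.castSucc j)) = dOne m
          then ψ (PP m a') * (Fintype.card F : ℂ) ^ (m + 1) else 0 := by
      intro a'
      rw [← Finset.mul_sum, sum_b_constr ψ hP a']
      split
      · rfl
      · rw [mul_zero]
    rw [Finset.sum_congr rfl fun a' _ => h2 a']
    rw [sum_snoc_split (fun a' => if (fun j : Fin (m + 1) => a' (Fin.castSucc j)) = dOne m
      then ψ (PP m a') * (Fintype.card F : ℂ) ^ (m + 1) else 0)]
    have h3 : ∀ (t : F) (w : Fin (m + 1) → F),
        (fun j : Fin (m + 1) => (Fin.snoc w t : Fin (m + 2) → F) (Fin.castSucc j)) = w :=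
      fun t w => funext fun j => by simp
    have h4 : ∀ t : F, (∑ w : Fin (m + 1) → F,
        if (fun j : Fin (m + 1) =>
            (Fin.snoc w t : Fin (m + 2) → F) (Fin.castSucc j)) = dOne m
        then ψ (PP m (Fin.snoc w t)) * (Fintype.card F : ℂ) ^ (m + 1) else 0)
        = ee ψ t * (Fintype.card F : ℂ) ^ (m + 1) := by
      intro t
      have : ∀ w : Fin (m + 1) → F,
          (if (fun j : Fin (m + 1) =>
              (Fin.snoc w t : Fin (m + 2) → F) (Fin.castSucc j)) = dOne m
          then ψ (PP m (Fin.snoc w t)) * (Fintype.card F : ℂ) ^ (m + 1) else 0)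
          = if w = dOne m
            then ψ (PP m (Fin.snoc w t)) * (Fintype.card F : ℂ) ^ (m + 1) else 0 := by
        intro w
        rw [h3 t w]
      rw [Finset.sum_congr rfl fun w _ => this w,
        Finset.sum_ite_eq' Finset.univ (dOne m)
          (fun w => ψ (PP m (Fin.snoc w t)) * (Fintype.card F : ℂ) ^ (m + 1)),
        if_pos (Finset.mem_univ _), snoc_dOne, psi_vT]
    rw [Finset.sum_congr rfl fun t _ => h4 t, ← Finset.sum_mul, sum_ee ψ hP, zero_mul]
  rw [hA, hB, sub_zero]

end ClaimB4

section Step1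

variable {F : Type} [Field F] [Fintype F] {m : ℕ}

/-- monic polynomial of degree `m` with coefficient vector `w`. -/
def MM (m : ℕ) (w : Fin m → F) : Polynomial F := X ^ m + sC w

lemma degree_sC_lt (w : Fin m → F) : (sC w).degree < (m : ℕ) := by
  rw [Polynomial.degree_lt_iff_coeff_zero]
  intro k hk
  rw [sC, coeff_sumC, dif_neg (by omega)]

lemma monic_MM (w : Fin m → F) : (MM m w).Monic :=
  monic_X_pow_add (degree_sC_lt w)

lemma natDegree_MM (w : Fin m → F) : (MM m w).natDegree = m := by
  have h : (MM m w).degree = m := by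
    rw [MM, degree_add_eq_left_of_degree_lt (by rw [degree_X_pow]; exact degree_sC_lt w),
      degree_X_pow]
  exact natDegree_eq_of_degree_eq_some h

lemma coeff_MM (w : Fin m → F) (j : ℕ) :
    (MM m w).coeff j = (if j = m then 1 else 0) + (if h : j < m then w ⟨j, h⟩ else 0) := by
  rw [MM, coeff_add, coeff_X_pow, sC, coeff_sumC]

lemma MM_inj : Function.Injective (MM m (F := F)) := by
  intro a b hab
  funext i
  have := congrArg (fun f => Polynomial.coeff f i) hab
  simp only [coeff_MM, dif_pos i.isLt] at this
  have h2 := add_left_cancel this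
  simpa [Fin.eta] using h2

lemma range_MM : Set.range (MM m (F := F)) =
    {f : Polynomial F | f.Monic ∧ f.natDegree = m} := by
  ext f
  constructor
  · rintro ⟨w, rfl⟩
    exact ⟨monic_MM w, natDegree_MM w⟩
  · rintro ⟨hmon, hdeg⟩
    refine ⟨fun i => f.coeff i, ?_⟩
    ext j
    rw [coeff_MM]
    by_cases h1 : j = m
    · subst h1
      have : f.coeff j = 1 := by
        have := hmon.leadingCoeff
        rwa [Polynomial.leadingCoeff, hdeg] at this
      rw [this, if_pos rfl, dif_neg (lt_irrefl j)]
      ring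
    · rw [if_neg h1]
      by_cases h2 : j < m
      · rw [dif_pos h2, zero_add]
      · rw [dif_neg h2, add_zero]
        symm
        exact Polynomial.coeff_eq_zero_of_natDegree_lt (by omega)

lemma reverse_MM (w : Fin m → F) :
    (MM m w).reverse = 1 + ∑ i : Fin m, C (w i) * X ^ (m - (i : ℕ)) := by
  have hrev : (MM m w).reverse = reflect m (MM m w) := by
    rw [Polynomial.reverse, natDegree_MM]
  rw [hrev, MM, reflect_add]
  congr 1
  · have : (X : Polynomial F) ^ m = C 1 * X ^ m := by rw [C_1, one_mul]
    rw [this, reflect_C_mul_X_pow, revAt_le (le_refl m), Nat.sub_self, pow_zero, C_1, mul_one]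
  · rw [sC]
    induction (Finset.univ : Finset (Fin m)) using Finset.cons_induction with
    | empty => simp
    | cons a s ha ih =>
      rw [Finset.sum_cons, Finset.sum_cons, reflect_add, ih,
        reflect_C_mul_X_pow, revAt_le (by omega : (a : ℕ) ≤ m)]

lemma sum_rev_eq (w : Fin m → F) :
    ∑ i : Fin m, C (w i) * X ^ (m - (i : ℕ)) = X * sC (fun j => w (Fin.rev j)) := by
  rw [sC, Finset.mul_sum]
  rw [← Equiv.sum_comp (Fin.revPerm) (fun i => C (w i) * X ^ (m - (i : ℕ)))]
  refine Finset.sum_congr rfl fun j _ => ?_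
  have h1 : Fin.revPerm j = Fin.rev j := rfl
  rw [h1]
  have h2 : m - ((Fin.rev j : Fin m) : ℕ) = (j : ℕ) + 1 := by
    have := j.isLt
    rw [Fin.val_rev]
    omega
  rw [h2, pow_succ]
  ring

lemma coeffSum_eq (ψ : MulChar (QuotR F (m + 1)) ℂ) :
    coeffSum F (attachedChar F (m + 1) ψ) m = SS ψ := by
  rw [coeffSum, ← range_MM, finsum_mem_range MM_inj, finsum_eq_sum_of_fintype, SS]
  have h1 : ∀ w : Fin m → F, attachedChar F (m + 1) ψ (MM m w)
      = ψ (mkR F (m + 1) (1 + X * sC (fun j => w (Fin.rev j)))) := by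
    intro w
    rw [attachedChar, reverse_MM, sum_rev_eq]
  rw [Finset.sum_congr rfl fun w _ => h1 w]
  refine Fintype.sum_bijective (fun w : Fin m → F => fun j => w (Fin.rev j)) ?_ _ _
    (fun w => rfl)
  refine Function.bijective_iff_has_inverse.mpr
    ⟨fun w => fun j => w (Fin.rev j), fun w => ?_, fun w => ?_⟩ <;>
    exact funext fun j => by simp only []; rw [Fin.rev_rev]

end Step1

/-- for `χ ∈ S_{n,q}`, `|∑_{f monic, deg f = n-1} χ(f)| = q^((n-1)/2)`;
equivalently `|ε_χ| = 1`. -/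
theorem statement3 (p : ℕ) (hp : p.Prime) (F : Type) [Field F] [Fintype F] (hchar : CharP F p)
    (n : ℕ) (hn : 1 ≤ n) (χ : Polynomial F → ℂ) (hχ : χ ∈ Snq F n) :
    ‖coeffSum F χ (n - 1)‖ = (Fintype.card F : ℝ) ^ (((n : ℝ) - 1) / 2) ∧
    ‖epsFactor F n χ‖ = 1 := by
  obtain ⟨ψ, hE, hPr, rfl⟩ := hχ
  obtain ⟨m, rfl⟩ : ∃ m, n = m + 1 := ⟨n - 1, by omega⟩
  have hm1 : m + 1 - 1 = m := rfl
  have hq0 : (0 : ℝ) < (Fintype.card F : ℝ) := by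
    exact_mod_cast Fintype.card_pos
  have hS : coeffSum F (attachedChar F (m + 1) ψ) m = SS ψ := coeffSum_eq ψ
  have hW : WW ψ = (Fintype.card F : ℂ) * SS ψ := claimA ψ hE hPr
  have hWW : WW ψ * (starRingEnd ℂ) (WW ψ) = (Fintype.card F : ℂ) ^ (m + 2) :=
    claimB ψ hPr
  have habsW : (‖WW ψ‖) ^ 2 = (Fintype.card F : ℝ) ^ (m + 2) := by
    rw [Complex.sq_norm]
    have h1 : ((Complex.normSq (WW ψ) : ℝ) : ℂ)
        = (((Fintype.card F : ℝ) ^ (m + 2) : ℝ) : ℂ) := by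
      rw [Complex.mul_conj] at hWW
      rw [hWW]
      push_cast
      ring
    exact_mod_cast h1
  have habsW' : ‖WW ψ‖
      = (Fintype.card F : ℝ) * ‖SS ψ‖ := by
    rw [hW, norm_mul, Complex.norm_natCast]
  have hA2 : (‖SS ψ‖) ^ 2 = (Fintype.card F : ℝ) ^ m := by
    rw [habsW'] at habsW
    have h2 : (Fintype.card F : ℝ) ^ 2 * (‖SS ψ‖) ^ 2
        = (Fintype.card F : ℝ) ^ 2 * (Fintype.card F : ℝ) ^ m := by
      rw [← mul_pow]
      rw [habsW]
      ring
    exact mul_left_cancel₀ (by positivity) h2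
  set B : ℝ := (Fintype.card F : ℝ) ^ ((m : ℝ) / 2) with hB
  have hB0 : 0 ≤ B := Real.rpow_nonneg (le_of_lt hq0) _
  have hB2 : B ^ 2 = (Fintype.card F : ℝ) ^ m := by
    rw [sq, hB, ← Real.rpow_add hq0]
    have : (m : ℝ) / 2 + (m : ℝ) / 2 = (m : ℝ) := by ring
    rw [this, Real.rpow_natCast]
  have key : ‖SS ψ‖ = B := by
    rw [← Real.sqrt_sq (norm_nonneg _), hA2, ← hB2, Real.sqrt_sq hB0]
  have goal1 : ‖coeffSum F (attachedChar F (m + 1) ψ) (m + 1 - 1)‖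
      = (Fintype.card F : ℝ) ^ ((((m + 1 : ℕ) : ℝ) - 1) / 2) := by
    rw [hm1, hS, key, hB]
    congr 1
    push_cast
    ring
  refine ⟨goal1, ?_⟩
  rw [epsFactor, hm1, lam, norm_mul, Complex.norm_real, Real.norm_eq_abs,
    abs_of_nonneg (Real.rpow_nonneg (le_of_lt hq0) _), hS, key, hB,
    ← Real.rpow_add hq0]
  have : -(m : ℝ) / 2 + (m : ℝ) / 2 = 0 := by ring
  rw [this, Real.rpow_zero]


end
end

section
/- (Functional equation.) For every χ ∈ S_{n,q} and every integer d with 0 ≤ d ≤ n−1, one has λ_{n−1−d}(χ) = ε_χ · conj(λ_d(χ)); equivalently, Σ_{f monic of degree n−1−d} χ(f) = q^{(n−1)/2 − d} · ε_χ · conj( Σ_{f monic of degree d} χ(f) ). -/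
open Polynomial

noncomputable section

namespace Stmt4

open Finset

variable {F : Type} [Field F] {n : ℕ}

lemma mk_eq_iff {g h : Polynomial F} :
    mkR F n g = mkR F n h ↔ ∀ i ≤ n, g.coeff i = h.coeff i := by
  simp only [mkR]
  rw [Ideal.Quotient.eq, Ideal.mem_span_singleton, Polynomial.X_pow_dvd_iff]
  constructor
  · intro H i hi
    have := H i (by omega)
    simpa [sub_eq_zero] using this
  · intro H i hi
    simp [sub_eq_zero, H i (by omega)]

def pol (A : ℕ → F) (k : ℕ) : Polynomial F :=
  1 + ∑ i ∈ Finset.range k, Polynomial.C (A i) * Polynomial.X ^ (i + 1)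

lemma pol_coeff_zero (A : ℕ → F) (k : ℕ) : (pol A k).coeff 0 = 1 := by
  simp [pol, coeff_X_pow]

lemma pol_coeff_succ (A : ℕ → F) (k j : ℕ) :
    (pol A k).coeff (j + 1) = if j < k then A j else 0 := by
  simp only [pol, coeff_add, coeff_one, finset_sum_coeff, coeff_C_mul, coeff_X_pow]
  have h : ∀ i ∈ range k, A i * (if j + 1 = i + 1 then (1:F) else 0)
      = if j = i then A i else 0 := by
    intro i _; by_cases h : j = i <;> simp [h]
  rw [Finset.sum_congr rfl h, Finset.sum_ite_eq (range k) j (fun i => A i)]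
  simp

lemma pol_congr {A B : ℕ → F} {k : ℕ} (h : ∀ j < k, A j = B j) : pol A k = pol B k := by
  unfold pol
  congr 1
  exact Finset.sum_congr rfl fun i hi => by rw [h i (mem_range.mp hi)]

lemma pol_trunc {A : ℕ → F} {k k' : ℕ} (hk : k' ≤ k) (h : ∀ j, k' ≤ j → A j = 0) :
    pol A k = pol A k' := by
  unfold pol
  congr 1
  refine (Finset.sum_subset (Finset.range_subset_range.mpr hk) ?_).symm
  intro i _ hni
  rw [h i (le_of_not_gt (by simpa using hni))]
  simp

lemma mk_pol_inj {A B : ℕ → F} (h : mkR F n (pol A n) = mkR F n (pol B n)) :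
    ∀ j < n, A j = B j := by
  intro j hj
  have := (mk_eq_iff.mp h) (j + 1) (by omega)
  simpa [pol_coeff_succ, hj] using this

lemma mk_eq_mk_pol {g : Polynomial F} (hg : g.coeff 0 = 1) :
    mkR F n g = mkR F n (pol (fun j => g.coeff (j + 1)) n) := by
  rw [mk_eq_iff]
  intro i hi
  cases i with
  | zero => simpa [pol_coeff_zero] using hg
  | succ j => rw [pol_coeff_succ, if_pos (by omega : j < n)]

lemma isUnit_mk {g : Polynomial F} (hg : g.coeff 0 = 1) : IsUnit (mkR F n g) := by
  have h1 : mkR F n g = 1 + mkR F n (g - 1) := by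
    rw [← map_one (mkR F n), ← map_add]
    congr 1; ring
  rw [h1]
  refine IsNilpotent.isUnit_one_add ⟨n + 1, ?_⟩
  rw [← map_pow]
  simp only [mkR]
  rw [Ideal.Quotient.eq_zero_iff_mem, Ideal.mem_span_singleton]
  exact pow_dvd_pow_of_dvd (Polynomial.X_dvd_iff.mpr (by simp [hg])) (n + 1)

lemma nontrivialQuot : Nontrivial (QuotR F n) := by
  refine Ideal.Quotient.nontrivial_iff.mpr (Ideal.span_singleton_ne_top ?_)
  intro h
  exact Polynomial.not_isUnit_X ((isUnit_pow_iff (Nat.succ_ne_zero n)).mp h)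

lemma charPQuot (p : ℕ) [CharP F p] : CharP (QuotR F n) p := by
  haveI := nontrivialQuot (F := F) (n := n)
  exact charP_of_injective_ringHom ((mkR F n).comp (Polynomial.C : F →+* Polynomial F)).injective p

lemma psi_conj_mul {p : ℕ} [Fact p.Prime] [CharP F p] (ψ : MulChar (QuotR F n) ℂ)
    {g : Polynomial F} (hg : g.coeff 0 = 1) :
    (starRingEnd ℂ) (ψ (mkR F n g)) * ψ (mkR F n g) = 1 := by
  haveI := charPQuot (F := F) (n := n) p
  set z := ψ (mkR F n g) with hz
  have hpM : n + 1 ≤ p ^ (n + 1) := by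
    have : n + 1 < p ^ (n + 1) := Nat.lt_pow_self (Fact.out (p := p.Prime)).one_lt
    omega
  have hnil : (mkR F n (g - 1)) ^ (p ^ (n + 1)) = 0 := by
    refine pow_eq_zero_of_le hpM ?_
    rw [← map_pow]
    simp only [mkR]
    rw [Ideal.Quotient.eq_zero_iff_mem, Ideal.mem_span_singleton]
    exact pow_dvd_pow_of_dvd (Polynomial.X_dvd_iff.mpr (by simp [hg])) (n + 1)
  have hone : z ^ (p ^ (n + 1)) = 1 := by
    have hsplit : mkR F n g = 1 + mkR F n (g - 1) := by
      rw [← map_one (mkR F n), ← map_add]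
      congr 1; ring
    rw [hz, ← map_pow, hsplit, add_pow_char_pow, one_pow, hnil, add_zero, map_one]
  have habs : ‖z‖ = 1 :=
    Complex.norm_eq_one_of_pow_eq_one hone (pow_ne_zero _ (Fact.out (p := p.Prime)).ne_zero)
  rw [mul_comm, Complex.mul_conj, Complex.normSq_eq_norm_sq, habs]
  norm_num


-- η part
def eta (ψ : MulChar (QuotR F n) ℂ) (c : F) : ℂ :=
  ψ (mkR F n (1 + Polynomial.C c * Polynomial.X ^ n))

lemma eta_zero (ψ : MulChar (QuotR F n) ℂ) : eta ψ 0 = 1 := by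
  simp [eta]

lemma eta_add (hn : 1 ≤ n) (ψ : MulChar (QuotR F n) ℂ) (b c : F) :
    eta ψ (b + c) = eta ψ b * eta ψ c := by
  unfold eta
  rw [← map_mul ψ, ← map_mul (mkR F n)]
  congr 1
  rw [mk_eq_iff]
  intro i hi
  have hX : ((1 + C b * X ^ n) * (1 + C c * X ^ n) : Polynomial F)
      = 1 + C (b + c) * X ^ n + C b * C c * X ^ (n + n) := by
    rw [C_add]; ring
  have hz : ((C b * C c * X ^ (n + n) : Polynomial F)).coeff i = 0 := by
    rw [← C_mul, coeff_C_mul, coeff_X_pow, if_neg (by omega)]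
    simp
  simp only [hX, coeff_add, hz, add_zero]

lemma eta_finsum (hn : 1 ≤ n) (ψ : MulChar (QuotR F n) ℂ) {ι : Type} (s : Finset ι)
    (f : ι → F) : eta ψ (∑ i ∈ s, f i) = ∏ i ∈ s, eta ψ (f i) := by
  classical
  induction s using Finset.cons_induction with
  | empty => simp [eta_zero]
  | cons a s ha ih => rw [Finset.sum_cons, Finset.prod_cons, eta_add hn, ih]

variable [Fintype F]

lemma sum_eta_shift (ψ : MulChar (QuotR F n) ℂ) (t₀ : F) :
    ∑ t : F, eta ψ (t + t₀) = ∑ t : F, eta ψ t :=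
  Fintype.sum_bijective (· + t₀) (Equiv.addRight t₀).bijective _ _ (fun _ => rfl)

lemma sum_eta_eq_zero (hn : 1 ≤ n) (ψ : MulChar (QuotR F n) ℂ)
    (hprim : ∃ a : F, eta ψ a ≠ 1) : ∑ t : F, eta ψ t = 0 := by
  obtain ⟨a, ha⟩ := hprim
  have h : eta ψ a * ∑ t : F, eta ψ t = ∑ t : F, eta ψ t := by
    rw [Finset.mul_sum]
    calc ∑ t : F, eta ψ a * eta ψ t = ∑ t : F, eta ψ (t + a) := by
          refine Finset.sum_congr rfl fun t _ => ?_
          rw [eta_add hn, mul_comm]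
      _ = ∑ t : F, eta ψ t := sum_eta_shift ψ a
  have h0 : (eta ψ a - 1) * ∑ t : F, eta ψ t = 0 := by linear_combination h
  rcases mul_eq_zero.mp h0 with h1 | h2
  · exact absurd (sub_eq_zero.mp h1) ha
  · exact h2

lemma sum_eta_mul (hn : 1 ≤ n) (ψ : MulChar (QuotR F n) ℂ)
    (hprim : ∃ a : F, eta ψ a ≠ 1) {s : F} (hs : s ≠ 0) :
    ∑ t : F, eta ψ (t * s) = 0 := by
  have h := Fintype.sum_bijective (· * s) (Equiv.mulRight₀ s hs).bijective
      (fun t => eta ψ (t * s)) (eta ψ) (fun _ => rfl)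
  rw [h]
  exact sum_eta_eq_zero hn ψ hprim


def ext' {k : ℕ} (a : Fin k → F) : ℕ → F := fun j => if h : j < k then a ⟨j, h⟩ else 0

lemma ext'_lt {k : ℕ} (a : Fin k → F) {j : ℕ} (h : j < k) : ext' a j = a ⟨j, h⟩ := dif_pos h

lemma ext'_ge {k : ℕ} (a : Fin k → F) {j : ℕ} (h : k ≤ j) : ext' a j = 0 :=
  dif_neg (by omega)

lemma nu_coeff_zero (hn : 1 ≤ n) (c : F) :
    ((1 : Polynomial F) + C c * X ^ n).coeff 0 = 1 := by
  rw [coeff_add, coeff_one, if_pos rfl, coeff_C_mul, coeff_X_pow,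
    if_neg (by omega), mul_zero, add_zero]


def melt (n k : ℕ) (a : Fin k → F) : QuotR F n := mkR F n (pol (ext' a) n)

def Tsum (n : ℕ) (ψ : MulChar (QuotR F n) ℂ) (k : ℕ) : ℂ :=
  ∑ a : Fin k → F, ψ (melt n k a)

lemma coeffSum_eq_T (ψ : MulChar (QuotR F n) ℂ) {k : ℕ} (hk : k ≤ n) :
    coeffSum F (attachedChar F n ψ) k = Tsum n ψ k := by
  classical
  set G : (Fin k → F) → Polynomial F :=
    fun a => X ^ k + ∑ i ∈ range k, C (ext' a i) * X ^ i with hG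
  have hGcoeff : ∀ (a : Fin k → F) (j : ℕ),
      (G a).coeff j = if h : j < k then a ⟨j, h⟩ else if j = k then 1 else 0 := by
    intro a j
    rw [hG]
    simp only [coeff_add, coeff_X_pow, finset_sum_coeff, coeff_C_mul]
    have hs : ∀ i ∈ range k, ext' a i * (if j = i then (1:F) else 0)
        = if j = i then ext' a i else 0 := by
      intro i _
      by_cases h : j = i
      · subst h; simp
      · rw [if_neg h, if_neg h, mul_zero]
    rw [Finset.sum_congr rfl hs, Finset.sum_ite_eq (range k) j (fun i => ext' a i)]
    by_cases h1 : j < k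
    · rw [if_pos (mem_range.mpr h1), dif_pos h1, ext'_lt a h1, if_neg (by omega), zero_add]
    · rw [dif_neg h1, if_neg (show j ∉ range k by simpa using h1), add_zero]
  have hGnat : ∀ a, (G a).natDegree = k := by
    intro a
    refine le_antisymm ?_ (le_natDegree_of_ne_zero ?_)
    · rw [hG]
      refine le_trans (natDegree_add_le _ _) (max_le (by simp) ?_)
      refine Polynomial.natDegree_sum_le_of_forall_le _ _ fun i hi => ?_
      exact le_trans (natDegree_C_mul_X_pow_le _ _) (le_of_lt (mem_range.mp hi))
    · rw [hGcoeff, dif_neg (lt_irrefl k), if_pos rfl]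
      exact one_ne_zero
  have hGmonic : ∀ a, (G a).Monic := by
    intro a
    refine Polynomial.monic_of_natDegree_le_of_coeff_eq_one k (le_of_eq (hGnat a)) ?_
    rw [hGcoeff, dif_neg (lt_irrefl k), if_pos rfl]
  have hGinj : Function.Injective G := by
    intro a b hab
    funext i
    have h1 := congrArg (fun g => Polynomial.coeff g ↑i) hab
    simp only [hGcoeff, dif_pos i.isLt] at h1
    simpa using h1
  have hset : {f : Polynomial F | f.Monic ∧ f.natDegree = k} = Set.range G := by
    ext f
    constructor
    · rintro ⟨hm, hdeg⟩
      refine ⟨fun i => f.coeff ↑i, ?_⟩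
      refine Polynomial.ext fun j => ?_
      rw [hGcoeff]
      by_cases h1 : j < k
      · rw [dif_pos h1]
      · rw [dif_neg h1]
        by_cases h2 : j = k
        · subst h2
          rw [if_pos rfl]
          have := hm.coeff_natDegree
          rw [hdeg] at this
          exact this.symm
        · rw [if_neg h2]
          exact (Polynomial.coeff_eq_zero_of_natDegree_lt (by omega)).symm
    · rintro ⟨a, rfl⟩
      exact ⟨hGmonic a, hGnat a⟩
  have hrev : ∀ a : Fin k → F,
      (G a).reverse = pol (ext' (fun i : Fin k => a i.rev)) k := by
    intro a
    refine Polynomial.ext fun j => ?_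
    rw [Polynomial.coeff_reverse, hGnat a]
    rcases j with _ | j
    · rw [Polynomial.revAt_zero, pol_coeff_zero, hGcoeff,
        dif_neg (lt_irrefl k), if_pos rfl]
    · rw [pol_coeff_succ]
      by_cases hj : j + 1 ≤ k
      · rw [Polynomial.revAt_le hj, hGcoeff, dif_pos (by omega : k - (j+1) < k),
          if_pos (by omega : j < k), ext'_lt _ (by omega : j < k)]
        show a _ = a _
        congr 1
      · rw [Polynomial.revAt_eq_self_of_lt (by omega), hGcoeff, dif_neg (by omega),
          if_neg (by omega), if_neg (by omega)]
  have h1 : coeffSum F (attachedChar F n ψ) k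
      = ∑ a : Fin k → F, attachedChar F n ψ (G a) := by
    rw [coeffSum, hset, finsum_mem_range hGinj, finsum_eq_sum_of_fintype]
  have h2 : ∀ a : Fin k → F,
      attachedChar F n ψ (G a) = ψ (melt n k (fun i : Fin k => a i.rev)) := by
    intro a
    have htr : pol (ext' (fun i : Fin k => a i.rev)) n
        = pol (ext' (fun i : Fin k => a i.rev)) k :=
      pol_trunc hk (fun j hj => ext'_ge _ hj)
    rw [attachedChar]
    show ψ (mkR F n (G a).reverse) = _
    rw [hrev a, melt, htr]
  rw [h1, Finset.sum_congr rfl (fun a _ => h2 a)]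
  exact Fintype.sum_bijective (fun (a : Fin k → F) => fun i : Fin k => a i.rev)
    (Function.Involutive.bijective fun a => by funext i; simp)
    _ _ (fun _ => rfl)


lemma key {p : ℕ} [Fact p.Prime] [CharP F p]
    (ψ : MulChar (QuotR F n) ℂ) (hprim : IsPrimitiveChar F n ψ)
    (hn : 1 ≤ n) {d : ℕ} (hd : d ≤ n - 1) :
    (Fintype.card F : ℂ) ^ d * Tsum n ψ (n - 1 - d) =
      (starRingEnd ℂ) (Tsum n ψ d) * Tsum n ψ (n - 1) := by
  classical
  set m := n - 1 with hm
  have hnm : n = m + 1 := by omega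
  have hdm : d ≤ m := hd
  set co : (Fin d → F) → (Fin m → F) → F :=
    fun v w => -((pol (ext' v) n * pol (ext' w) n).coeff n) with hco
  -- coefficient formula
  have hcoeff_n : ∀ (v : Fin d → F) (w : Fin m → F),
      (pol (ext' v) n * pol (ext' w) n).coeff n
        = ∑ i ∈ range d, ext' v i * ext' w (m - 1 - i) := by
    intro v w
    rw [Polynomial.coeff_mul, Finset.Nat.sum_antidiagonal_eq_sum_range_succ_mk,
      Finset.sum_range_succ']
    have hstep : ∀ i ∈ range n,
        (pol (ext' v) n).coeff (i + 1) * (pol (ext' w) n).coeff (n - (i + 1))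
          = ext' v i * (pol (ext' w) n).coeff (m - i) := by
      intro i hi
      rw [pol_coeff_succ, if_pos (mem_range.mp hi)]
      congr 2
      omega
    rw [Finset.sum_congr rfl hstep]
    have hzero : (pol (ext' v) n).coeff 0 * (pol (ext' w) n).coeff (n - 0) = 0 := by
      rw [pol_coeff_zero, one_mul, show n - 0 = m + 1 from by omega, pol_coeff_succ,
        if_pos (by omega), ext'_ge _ (le_refl m)]
    rw [hzero, add_zero]
    have hsub : range d ⊆ range n := Finset.range_subset_range.mpr (by omega)
    have hvanish : ∀ i ∈ range n, i ∉ range d →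
        ext' v i * (pol (ext' w) n).coeff (m - i) = 0 := by
      intro i _ hni
      rw [ext'_ge v (le_of_not_gt (by simpa using hni)), zero_mul]
    rw [← Finset.sum_subset hsub hvanish]
    refine Finset.sum_congr rfl fun i hi => ?_
    have hid : i < d := mem_range.mp hi
    rw [show m - i = (m - 1 - i) + 1 from by omega, pol_coeff_succ,
      if_pos (by omega)]
  -- Way 2 : per-v substitution
  have hway2 : ∀ v : Fin d → F,
      ∑ w : Fin m → F, ψ (melt n m w) * eta ψ (co v w)
        = (starRingEnd ℂ) (ψ (melt n d v)) * Tsum n ψ m := by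
    intro v
    set PW : (Fin m → F) → Polynomial F :=
      fun w => pol (ext' v) n * pol (ext' w) n * (1 + C (co v w) * X ^ n) with hPW
    have hP0 : ∀ w, (PW w).coeff 0 = 1 := by
      intro w
      rw [hPW]
      simp only [Polynomial.mul_coeff_zero]
      rw [pol_coeff_zero, pol_coeff_zero, nu_coeff_zero hn, one_mul, one_mul]
    have hPn : ∀ w, (PW w).coeff n = 0 := by
      intro w
      have expand : PW w = pol (ext' v) n * pol (ext' w) n
          + ((pol (ext' v) n * pol (ext' w) n) * X ^ n) * C (co v w) := by
        rw [hPW]; ring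
      rw [expand, coeff_add, coeff_mul_C, Polynomial.coeff_mul_X_pow',
        if_pos (le_refl n), Nat.sub_self, Polynomial.mul_coeff_zero,
        pol_coeff_zero, pol_coeff_zero, one_mul, one_mul, hco]
      ring
    set g : (Fin m → F) → (Fin m → F) := fun w i => (PW w).coeff (↑i + 1) with hg
    have hmelt : ∀ w, melt n m (g w) = mkR F n (PW w) := by
      intro w
      rw [melt, mk_eq_mk_pol (hP0 w)]
      congr 1
      apply pol_congr
      intro j hj
      by_cases hjm : j < m
      · rw [ext'_lt _ hjm]
      · rw [ext'_ge _ (by omega), show j = m from by omega]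
        rw [show m + 1 = n from by omega]
        exact (hPn w).symm
    have hval : ∀ w, ψ (mkR F n (PW w))
        = ψ (melt n d v) * (ψ (melt n m w) * eta ψ (co v w)) := by
      intro w
      rw [hPW, map_mul (mkR F n), map_mul (mkR F n), map_mul ψ, map_mul ψ]
      rw [melt, melt, eta]
      ring
    -- multiplication by nu in coordinates
    have hmul_nu : ∀ (w : Fin m → F) (c : F),
        mkR F n (pol (ext' w) n * (1 + C c * X ^ n))
          = mkR F n (pol (fun j => if j = m then c else ext' w j) n) := by
      intro w c
      have h0 : (pol (ext' w) n * (1 + C c * X ^ n)).coeff 0 = 1 := by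
        rw [Polynomial.mul_coeff_zero, pol_coeff_zero, nu_coeff_zero hn, one_mul]
      rw [mk_eq_mk_pol h0]
      congr 1
      apply pol_congr
      intro j hj
      have expand : pol (ext' w) n * (1 + C c * X ^ n)
          = pol (ext' w) n + (pol (ext' w) n * X ^ n) * C c := by ring
      rw [expand, coeff_add, coeff_mul_C, Polynomial.coeff_mul_X_pow',
        pol_coeff_succ, if_pos hj]
      by_cases hjm : j = m
      · rw [if_pos (show n ≤ j + 1 from by omega),
          show j + 1 - n = 0 from by omega, pol_coeff_zero, one_mul,
          if_pos hjm, ext'_ge _ (by omega), zero_add]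
      · rw [if_neg (show ¬ n ≤ j + 1 from by omega), zero_mul, add_zero, if_neg hjm]
    have hinj : Function.Injective g := by
      intro w w' hww
      have h1 : mkR F n (PW w) = mkR F n (PW w') := by
        rw [← hmelt w, ← hmelt w', hww]
      have hu : IsUnit (mkR F n (pol (ext' v) n)) := isUnit_mk (pol_coeff_zero _ _)
      have h2' : mkR F n (pol (ext' v) n)
            * mkR F n (pol (ext' w) n * (1 + C (co v w) * X ^ n))
          = mkR F n (pol (ext' v) n)
            * mkR F n (pol (ext' w') n * (1 + C (co v w') * X ^ n)) := by
        rw [← map_mul, ← map_mul]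
        rw [show pol (ext' v) n * (pol (ext' w) n * (1 + C (co v w) * X ^ n)) = PW w
            from by rw [hPW]; ring]
        rw [show pol (ext' v) n * (pol (ext' w') n * (1 + C (co v w') * X ^ n)) = PW w'
            from by rw [hPW]; ring]
        exact h1
      have h2 := hu.mul_left_cancel h2'
      rw [hmul_nu, hmul_nu] at h2
      have h3 := mk_pol_inj h2
      funext i
      have h4 := h3 ↑i (by omega)
      rw [if_neg (show ¬ (↑i : ℕ) = m from by omega),
        if_neg (show ¬ (↑i : ℕ) = m from by omega),
        ext'_lt _ i.isLt, ext'_lt _ i.isLt] at h4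
      simpa using h4
    have hbij : Function.Bijective g := Finite.injective_iff_bijective.mp hinj
    have hsum : ψ (melt n d v) * ∑ w : Fin m → F, ψ (melt n m w) * eta ψ (co v w)
        = Tsum n ψ m := by
      rw [Finset.mul_sum]
      calc ∑ w : Fin m → F, ψ (melt n d v) * (ψ (melt n m w) * eta ψ (co v w))
          = ∑ w : Fin m → F, ψ (melt n m (g w)) := by
            refine Finset.sum_congr rfl fun w _ => ?_
            rw [hmelt, hval]
        _ = ∑ w : Fin m → F, ψ (melt n m w) :=
            Fintype.sum_bijective g hbij _ _ (fun _ => rfl)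
        _ = Tsum n ψ m := rfl
    have hcc : (starRingEnd ℂ) (ψ (melt n d v)) * ψ (melt n d v) = 1 :=
      psi_conj_mul (p := p) ψ (pol_coeff_zero (ext' v) n)
    calc ∑ w : Fin m → F, ψ (melt n m w) * eta ψ (co v w)
        = ((starRingEnd ℂ) (ψ (melt n d v)) * ψ (melt n d v))
            * ∑ w : Fin m → F, ψ (melt n m w) * eta ψ (co v w) := by rw [hcc, one_mul]
      _ = (starRingEnd ℂ) (ψ (melt n d v))
            * (ψ (melt n d v) * ∑ w : Fin m → F, ψ (melt n m w) * eta ψ (co v w)) := by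
          ring
      _ = (starRingEnd ℂ) (ψ (melt n d v)) * Tsum n ψ m := by rw [hsum]
  -- primitivity in eta terms
  have hprim' : ∃ a : F, eta ψ a ≠ 1 := hprim
  -- Way 1 : orthogonality
  have hway1 : ∀ w : Fin m → F,
      ∑ v : Fin d → F, eta ψ (co v w)
        = if ∀ i : Fin d, ext' w (m - 1 - ↑i) = 0 then (Fintype.card F : ℂ) ^ d
          else 0 := by
    intro w
    have hrw : ∀ v : Fin d → F,
        eta ψ (co v w) = ∏ i : Fin d, eta ψ (v i * (-(ext' w (m - 1 - ↑i)))) := by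
      intro v
      have hneg : co v w = ∑ i ∈ range d, ext' v i * (-(ext' w (m - 1 - i))) := by
        rw [hco]
        show -((pol (ext' v) n * pol (ext' w) n).coeff n) = _
        rw [hcoeff_n, ← Finset.sum_neg_distrib]
        exact Finset.sum_congr rfl fun i _ => (mul_neg _ _).symm
      have hfin : (∑ i ∈ range d, ext' v i * (-(ext' w (m - 1 - i))))
          = ∑ i : Fin d, v i * (-(ext' w (m - 1 - ↑i))) := by
        rw [← Fin.sum_univ_eq_sum_range (fun i => ext' v i * (-(ext' w (m - 1 - i)))) d]
        refine Finset.sum_congr rfl fun i _ => ?_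
        rw [ext'_lt v i.isLt]
      rw [hneg, hfin, eta_finsum hn ψ]
    calc ∑ v : Fin d → F, eta ψ (co v w)
        = ∑ v : Fin d → F, ∏ i : Fin d, eta ψ (v i * (-(ext' w (m - 1 - ↑i)))) :=
          Finset.sum_congr rfl fun v _ => hrw v
      _ = ∏ i : Fin d, ∑ t : F, eta ψ (t * (-(ext' w (m - 1 - ↑i)))) := by
          rw [show (Finset.univ : Finset (Fin d → F))
              = Fintype.piFinset (fun _ : Fin d => (Finset.univ : Finset F)) from
            (@Fintype.piFinset_univ (Fin d) (fun _ => F) _ _ _).symm]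
          exact (Finset.prod_univ_sum (fun _ : Fin d => (Finset.univ : Finset F))
            (fun i t => eta ψ (t * (-(ext' w (m - 1 - ↑i)))))).symm
      _ = _ := by
          by_cases hcond : ∀ i : Fin d, ext' w (m - 1 - ↑i) = 0
          · rw [if_pos hcond]
            calc ∏ i : Fin d, ∑ t : F, eta ψ (t * (-(ext' w (m - 1 - ↑i))))
                = ∏ _i : Fin d, (Fintype.card F : ℂ) := by
                  refine Finset.prod_congr rfl fun i _ => ?_
                  rw [hcond i, neg_zero]
                  simp [eta_zero]
              _ = (Fintype.card F : ℂ) ^ d := by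
                  rw [Finset.prod_const, Finset.card_univ, Fintype.card_fin]
          · rw [if_neg hcond]
            push_neg at hcond
            obtain ⟨i0, hi0⟩ := hcond
            exact Finset.prod_eq_zero (Finset.mem_univ i0)
              (sum_eta_mul hn ψ hprim' (neg_ne_zero.mpr hi0))
  -- assemble
  have hA1 : ∑ v : Fin d → F, ∑ w : Fin m → F, ψ (melt n m w) * eta ψ (co v w)
      = (starRingEnd ℂ) (Tsum n ψ d) * Tsum n ψ m := by
    calc ∑ v : Fin d → F, ∑ w : Fin m → F, ψ (melt n m w) * eta ψ (co v w)
        = ∑ v : Fin d → F, (starRingEnd ℂ) (ψ (melt n d v)) * Tsum n ψ m :=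
          Finset.sum_congr rfl fun v _ => hway2 v
      _ = (∑ v : Fin d → F, (starRingEnd ℂ) (ψ (melt n d v))) * Tsum n ψ m := by
          rw [Finset.sum_mul]
      _ = (starRingEnd ℂ) (Tsum n ψ d) * Tsum n ψ m := by
          rw [show (starRingEnd ℂ) (Tsum n ψ d)
              = ∑ v : Fin d → F, (starRingEnd ℂ) (ψ (melt n d v)) from by
            rw [Tsum, map_sum]]
  -- the padding map
  set π : (Fin (m - d) → F) → (Fin m → F) := fun u i => ext' u ↑i with hπ
  have hπinj : Function.Injective π := by
    intro u u' h
    funext i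
    have h1 := congrFun h ⟨↑i, by omega⟩
    rw [hπ] at h1
    simp only at h1
    rw [ext'_lt u i.isLt, ext'_lt u' i.isLt] at h1
    simpa using h1
  have hmeltπ : ∀ u : Fin (m - d) → F, melt n m (π u) = melt n (m - d) u := by
    intro u
    rw [melt, melt]
    congr 1
    apply pol_congr
    intro j hj
    by_cases hjm : j < m
    · rw [ext'_lt (π u) hjm]
    · rw [ext'_ge _ (le_of_not_gt hjm), ext'_ge _ (by omega)]
  have hfilter : Finset.univ.filter (fun w : Fin m → F =>
        ∀ i : Fin d, ext' w (m - 1 - ↑i) = 0)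
      = Finset.univ.image π := by
    ext w
    simp only [Finset.mem_filter, Finset.mem_univ, true_and, Finset.mem_image]
    constructor
    · intro hcondw
      refine ⟨fun i => w ⟨↑i, by omega⟩, ?_⟩
      funext i
      show ext' _ (↑i : ℕ) = w i
      by_cases hi : (↑i : ℕ) < m - d
      · rw [ext'_lt _ hi]
      · rw [ext'_ge _ (le_of_not_gt hi)]
        have hj : m - 1 - (↑i : ℕ) < d := by omega
        have h5 := hcondw ⟨m - 1 - ↑i, hj⟩
        rw [show m - 1 - (m - 1 - (↑i : ℕ)) = ↑i from by omega] at h5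
        rw [ext'_lt _ i.isLt] at h5
        simpa using h5.symm
    · rintro ⟨u, rfl⟩
      intro i
      have him : m - 1 - (↑i : ℕ) < m := by omega
      rw [ext'_lt _ him]
      show ext' u (m - 1 - (↑i : ℕ)) = 0
      exact ext'_ge _ (by omega)
  have hA2 : ∑ v : Fin d → F, ∑ w : Fin m → F, ψ (melt n m w) * eta ψ (co v w)
      = (Fintype.card F : ℂ) ^ d * Tsum n ψ (m - d) := by
    rw [Finset.sum_comm]
    calc ∑ w : Fin m → F, ∑ v : Fin d → F, ψ (melt n m w) * eta ψ (co v w)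
        = ∑ w : Fin m → F, ψ (melt n m w) * ∑ v : Fin d → F, eta ψ (co v w) := by
          exact Finset.sum_congr rfl fun w _ => by rw [Finset.mul_sum]
      _ = ∑ w : Fin m → F, (if ∀ i : Fin d, ext' w (m - 1 - ↑i) = 0
            then ψ (melt n m w) * (Fintype.card F : ℂ) ^ d else 0) := by
          refine Finset.sum_congr rfl fun w _ => ?_
          rw [hway1 w]
          split
          · rfl
          · rw [mul_zero]
      _ = ∑ w ∈ Finset.univ.filter (fun w : Fin m → F =>
            ∀ i : Fin d, ext' w (m - 1 - ↑i) = 0),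
            ψ (melt n m w) * (Fintype.card F : ℂ) ^ d := (Finset.sum_filter _ _).symm
      _ = ∑ u : Fin (m - d) → F, ψ (melt n m (π u)) * (Fintype.card F : ℂ) ^ d := by
          rw [hfilter, Finset.sum_image (fun u _ u' _ h => hπinj h)]
      _ = (Fintype.card F : ℂ) ^ d * Tsum n ψ (m - d) := by
          rw [← Finset.sum_mul, mul_comm]
          congr 1
          rw [Tsum]
          exact Finset.sum_congr rfl fun u _ => by rw [hmeltπ u]
  exact hA2.symm.trans hA1

end Stmt4

/-- functional equation: for `χ ∈ S_{n,q}` and `0 ≤ d ≤ n-1`,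
`λ_{n-1-d}(χ) = ε_χ ⬝ conj(λ_d(χ))`; equivalently
`∑_{f monic, deg f = n-1-d} χ(f) = q^((n-1)/2 - d) ε_χ conj(∑_{f monic, deg f = d} χ(f))`. -/
theorem statement4 (p : ℕ) (hp : p.Prime) (F : Type) [Field F] [Fintype F] (hchar : CharP F p)
    (n : ℕ) (hn : 1 ≤ n) (χ : Polynomial F → ℂ) (hχ : χ ∈ Snq F n)
    (d : ℕ) (hd : d ≤ n - 1) :
    lam F χ (n - 1 - d) = epsFactor F n χ * (starRingEnd ℂ) (lam F χ d) ∧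
    coeffSum F χ (n - 1 - d) =
      ((((Fintype.card F : ℝ) ^ (((n : ℝ) - 1) / 2 - (d : ℝ)) : ℝ)) : ℂ) *
        (epsFactor F n χ * (starRingEnd ℂ) (coeffSum F χ d)) := by
  classical
  obtain ⟨ψ, -, hprim, rfl⟩ := hχ
  haveI : Fact p.Prime := ⟨hp⟩
  haveI := hchar
  have hkey := Stmt4.key (p := p) ψ hprim hn hd
  have hq0 : (0 : ℝ) < (Fintype.card F : ℝ) := by
    exact_mod_cast Fintype.card_pos
  have hTd := Stmt4.coeffSum_eq_T ψ (show d ≤ n by omega)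
  have hTm := Stmt4.coeffSum_eq_T ψ (show n - 1 ≤ n by omega)
  have hTmd := Stmt4.coeffSum_eq_T ψ (show n - 1 - d ≤ n by omega)
  have hne : ((Fintype.card F : ℂ)) ^ d ≠ 0 := by
    apply pow_ne_zero
    exact_mod_cast hq0.ne'
  have goal2 : Stmt4.Tsum n ψ (n - 1 - d)
      = ((Fintype.card F : ℂ) ^ d)⁻¹
        * ((starRingEnd ℂ) (Stmt4.Tsum n ψ d) * Stmt4.Tsum n ψ (n - 1)) := by
    rw [eq_inv_mul_iff_mul_eq₀ hne]
    exact hkey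
  have hscal' : (((Fintype.card F : ℂ)) ^ d)⁻¹
      = (((Fintype.card F : ℝ) ^ (((n : ℝ) - 1) / 2 - (d : ℝ)) : ℝ) : ℂ)
        * (((Fintype.card F : ℝ) ^ (-((n - 1 : ℕ) : ℝ) / 2) : ℝ) : ℂ) := by
    rw [← Complex.ofReal_mul, ← Real.rpow_add hq0]
    have he : ((n : ℝ) - 1) / 2 - (d : ℝ) + -(((n - 1 : ℕ) : ℝ)) / 2 = -(d : ℝ) := by
      rw [Nat.cast_sub hn]
      push_cast
      ring
    rw [he, Real.rpow_neg hq0.le, Real.rpow_natCast]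
    rw [Complex.ofReal_inv, Complex.ofReal_pow, Complex.ofReal_natCast]
  have hpart2 : coeffSum F (attachedChar F n ψ) (n - 1 - d) =
      ((((Fintype.card F : ℝ) ^ (((n : ℝ) - 1) / 2 - (d : ℝ)) : ℝ)) : ℂ) *
        (epsFactor F n (attachedChar F n ψ)
          * (starRingEnd ℂ) (coeffSum F (attachedChar F n ψ) d)) := by
    rw [hTmd, hTd, epsFactor, lam, hTm, goal2, hscal']
    ring
  refine ⟨?_, hpart2⟩
  rw [lam, lam, hpart2]
  have hscal2 : (((Fintype.card F : ℝ) ^ (-((n - 1 - d : ℕ) : ℝ) / 2) : ℝ) : ℂ)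
      * (((Fintype.card F : ℝ) ^ (((n : ℝ) - 1) / 2 - (d : ℝ)) : ℝ) : ℂ)
      = (((Fintype.card F : ℝ) ^ (-(d : ℝ) / 2) : ℝ) : ℂ) := by
    rw [← Complex.ofReal_mul, ← Real.rpow_add hq0]
    have hcast : ((n - 1 - d : ℕ) : ℝ) = (n : ℝ) - 1 - (d : ℝ) := by
      rw [Nat.cast_sub hd, Nat.cast_sub hn]
      push_cast
      ring
    rw [show -((n - 1 - d : ℕ) : ℝ) / 2 + (((n : ℝ) - 1) / 2 - (d : ℝ)) = -(d : ℝ) / 2 from by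
      rw [hcast]; ring]
  rw [map_mul, Complex.conj_ofReal]
  linear_combination (epsFactor F n (attachedChar F n ψ)
    * (starRingEnd ℂ) (coeffSum F (attachedChar F n ψ) d)) * hscal2

end
end

section
/- Let R be a commutative ring, let n ≥ 1 and k ≥ 1 be integers, and let c : ℤ → R be a function with c_j = 0 whenever j < 0 or j > n−1. Then the following identity holds in the polynomial ring R[β_1, …, β_k]: ( Σ_{σ ∈ S_k} sgn(σ) ∏_{i=1}^k β_i^{σ(i)−1} ) · ( Σ_{(e_1,…,e_k) ∈ {0,…,n−1}^k} ∏_{i=1}^k β_i^{e_i} · ∏_{i=1}^k c_{e_i} ) = Σ_{σ ∈ S_k} Σ_{0 ≤ d_1 ≤ d_2 ≤ ⋯ ≤ d_k ≤ n−1} sgn(σ) ( ∏_{i=1}^k β_{σ(i)}^{d_i + i − 1} ) · det( c_{d_i + i − j} )_{1≤i,j≤k}. -/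
open Finset MvPolynomial Equiv

private lemma gap_aux {k : ℕ} (g : Fin k → ℕ) (hg : StrictMono g) :
    ∀ p : ℕ, ∀ i j : Fin k, (i : ℕ) + p = (j : ℕ) → g i + p ≤ g j := by
  intro p
  induction p with
  | zero =>
    intro i j h
    have : i = j := Fin.ext (by omega)
    subst this; omega
  | succ p ih =>
    intro i j h
    have hik : (i : ℕ) + 1 < k := by have := j.isLt; omega
    have h1 : g i < g ⟨(i : ℕ) + 1, hik⟩ := hg (by simp [Fin.lt_def])
    have h2 := ih ⟨(i : ℕ) + 1, hik⟩ j (show (i : ℕ) + 1 + p = (j : ℕ) by omega)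
    omega

private lemma strictmono_shift {k : ℕ} (d : Fin k → ℕ) (hd : Monotone d) :
    StrictMono (fun i : Fin k => d i + (i : ℕ)) := by
  intro i j hij
  have h1 : d i ≤ d j := hd hij.le
  have h2 : (i : ℕ) < (j : ℕ) := hij
  show d i + (i : ℕ) < d j + (j : ℕ)
  omega

/-- the Jacobi–Trudi generating identity in `R[β_1,…,β_k]` (0-indexed):
`(∑_σ sgn σ ∏_i β_i^{σ(i)-1}) (∑_e ∏_i β_i^{e_i} ∏_i c_{e_i})
  = ∑_σ ∑_{0 ≤ d_1 ≤ ⋯ ≤ d_k ≤ n-1} sgn σ (∏_i β_{σ(i)}^{d_i+i-1}) det(c_{d_i+i-j})`. -/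
theorem statement7 (R : Type) [CommRing R] (n k : ℕ) (hn : 1 ≤ n) (hk : 1 ≤ k)
    (c : ℤ → R) (hc : ∀ j : ℤ, (j < 0 ∨ (n : ℤ) - 1 < j) → c j = 0) :
    (∑ σ : Equiv.Perm (Fin k),
        ((Equiv.Perm.sign σ : ℤ) : MvPolynomial (Fin k) R) *
          ∏ i : Fin k, MvPolynomial.X i ^ (σ i : ℕ)) *
      (∑ e : Fin k → Fin n,
        (∏ i : Fin k, MvPolynomial.X i ^ (e i : ℕ)) *
          MvPolynomial.C (∏ i : Fin k, c ((e i : ℕ) : ℤ))) =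
    ∑ σ : Equiv.Perm (Fin k),
      ∑ᶠ d ∈ {d : Fin k → ℕ | Monotone d ∧ ∀ i, d i ≤ n - 1},
        ((Equiv.Perm.sign σ : ℤ) : MvPolynomial (Fin k) R) *
          (∏ i : Fin k, MvPolynomial.X (σ i) ^ (d i + (i : ℕ))) *
          MvPolynomial.C
            (Matrix.det (Matrix.of fun i j : Fin k =>
              c ((d i : ℤ) + ((i : ℕ) : ℤ) - ((j : ℕ) : ℤ)))) := by
  classical
  obtain ⟨m, rfl⟩ : ∃ m, n = m + 1 := ⟨n - 1, by omega⟩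
  have hc' : ∀ j : ℤ, (j < 0 ∨ (m : ℤ) < j) → c j = 0 := by
    intro j hj; apply hc; push_cast; omega
  set K := m + k with hK
  have hKpos : 0 < K := by omega
  set G : (Fin k → Fin K) → MvPolynomial (Fin k) R := fun F =>
    (∏ i : Fin k, X i ^ (F i : ℕ)) *
      C ((Matrix.of fun i j : Fin k =>
        c (((F i : ℕ) : ℤ) - ((j : ℕ) : ℤ))).det) with hG
  have key_det : ∀ F : Fin k → Fin K,
      (Matrix.of fun i j : Fin k => c (((F i : ℕ) : ℤ) - ((j : ℕ) : ℤ))).det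
        = ∑ σ : Perm (Fin k), ((Equiv.Perm.sign σ : ℤ) : R) *
            ∏ i : Fin k, c (((F i : ℕ) : ℤ) - ((σ i : ℕ) : ℤ)) := by
    intro F
    rw [← Matrix.det_transpose, Matrix.det_apply']
    apply Finset.sum_congr rfl
    intro σ _
    congr 1
  trans (∑ F : Fin k → Fin K, G F)
  · -- LHS = middle
    rw [Finset.sum_mul_sum]
    have step1 : ∀ σ : Perm (Fin k),
        (∑ e : Fin k → Fin (m + 1),
          (((Equiv.Perm.sign σ : ℤ) : MvPolynomial (Fin k) R) *
              ∏ i : Fin k, X i ^ (σ i : ℕ)) *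
            ((∏ i : Fin k, X i ^ (e i : ℕ)) * C (∏ i : Fin k, c ((e i : ℕ) : ℤ))))
        = ∑ F : Fin k → Fin K,
            ((Equiv.Perm.sign σ : ℤ) : MvPolynomial (Fin k) R) *
              ((∏ i : Fin k, X i ^ (F i : ℕ)) *
                C (∏ i : Fin k, c (((F i : ℕ) : ℤ) - ((σ i : ℕ) : ℤ)))) := by
      intro σ
      have h2 : ∑ F ∈ Finset.univ.filter
            (fun F : Fin k → Fin K => ∀ i, (σ i : ℕ) ≤ (F i : ℕ) ∧ (F i : ℕ) ≤ (σ i : ℕ) + m),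
            ((Equiv.Perm.sign σ : ℤ) : MvPolynomial (Fin k) R) *
              ((∏ i : Fin k, X i ^ (F i : ℕ)) *
                C (∏ i : Fin k, c (((F i : ℕ) : ℤ) - ((σ i : ℕ) : ℤ))))
          = ∑ F : Fin k → Fin K,
            ((Equiv.Perm.sign σ : ℤ) : MvPolynomial (Fin k) R) *
              ((∏ i : Fin k, X i ^ (F i : ℕ)) *
                C (∏ i : Fin k, c (((F i : ℕ) : ℤ) - ((σ i : ℕ) : ℤ)))) := by
        apply Finset.sum_filter_of_ne
        intro F _ hne
        by_contra hP
        push_neg at hP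
        obtain ⟨i0, hi0⟩ := hP
        have hz : c (((F i0 : ℕ) : ℤ) - ((σ i0 : ℕ) : ℤ)) = 0 := by
          apply hc'
          by_cases h : (σ i0 : ℕ) ≤ (F i0 : ℕ)
          · right; have := hi0 h; push_cast; omega
          · left; push_cast; omega
        apply hne
        have : (∏ i : Fin k, c (((F i : ℕ) : ℤ) - ((σ i : ℕ) : ℤ))) = 0 :=
          Finset.prod_eq_zero (Finset.mem_univ i0) hz
        rw [this]
        simp
      rw [← h2]
      refine Finset.sum_nbij'
        (i := fun (e : Fin k → Fin (m + 1)) (i0 : Fin k) =>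
          (⟨(σ i0 : ℕ) + (e i0 : ℕ), by have := (σ i0).isLt; have := (e i0).isLt; omega⟩ : Fin K))
        (j := fun (F : Fin k → Fin K) (i0 : Fin k) =>
          (⟨((F i0 : ℕ) - (σ i0 : ℕ)) % (m + 1), Nat.mod_lt _ (by omega)⟩ : Fin (m + 1)))
        ?_ ?_ ?_ ?_ ?_
      · intro e _
        simp only [Finset.mem_filter, Finset.mem_univ, true_and]
        intro i
        have := (e i).isLt
        show (σ i : ℕ) ≤ (σ i : ℕ) + (e i : ℕ) ∧ (σ i : ℕ) + (e i : ℕ) ≤ (σ i : ℕ) + m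
        omega
      · intro F _; exact Finset.mem_univ _
      · intro e _
        funext i
        apply Fin.ext
        have h1 := (e i).isLt
        simp only [Fin.val_mk]
        have h2 : ((σ i : ℕ) + (e i : ℕ)) - (σ i : ℕ) = (e i : ℕ) := by omega
        rw [h2]
        exact Nat.mod_eq_of_lt h1
      · intro F hF
        simp only [Finset.mem_filter, Finset.mem_univ, true_and] at hF
        funext i
        apply Fin.ext
        have h := hF i
        have h1 : ((F i : ℕ) - (σ i : ℕ)) % (m + 1) = (F i : ℕ) - (σ i : ℕ) :=
          Nat.mod_eq_of_lt (by omega)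
        simp only [Fin.val_mk, h1]
        omega
      · intro e _
        have hX : (∏ i : Fin k, X (R := R) i ^ (σ i : ℕ)) * (∏ i : Fin k, X i ^ (e i : ℕ))
            = ∏ i : Fin k, X (R := R) i ^ ((σ i : ℕ) + (e i : ℕ)) := by
          rw [← Finset.prod_mul_distrib]
          apply Finset.prod_congr rfl
          intro i _
          rw [pow_add]
        have hcm : (∏ i : Fin k, c ((((σ i : ℕ) + (e i : ℕ) : ℕ) : ℤ) - ((σ i : ℕ) : ℤ)))
            = ∏ i : Fin k, c ((e i : ℕ) : ℤ) := by
          apply Finset.prod_congr rfl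
          intro i _
          congr 1
          push_cast
          ring
        simp only [Fin.val_mk]
        rw [← hcm, ← hX]
        ring
    calc ∑ σ : Perm (Fin k), ∑ e : Fin k → Fin (m + 1),
          (((Equiv.Perm.sign σ : ℤ) : MvPolynomial (Fin k) R) *
              ∏ i : Fin k, X i ^ (σ i : ℕ)) *
            ((∏ i : Fin k, X i ^ (e i : ℕ)) * C (∏ i : Fin k, c ((e i : ℕ) : ℤ)))
        = ∑ σ : Perm (Fin k), ∑ F : Fin k → Fin K,
            ((Equiv.Perm.sign σ : ℤ) : MvPolynomial (Fin k) R) *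
              ((∏ i : Fin k, X i ^ (F i : ℕ)) *
                C (∏ i : Fin k, c (((F i : ℕ) : ℤ) - ((σ i : ℕ) : ℤ)))) :=
          Finset.sum_congr rfl (fun σ _ => step1 σ)
      _ = ∑ F : Fin k → Fin K, ∑ σ : Perm (Fin k),
            ((Equiv.Perm.sign σ : ℤ) : MvPolynomial (Fin k) R) *
              ((∏ i : Fin k, X i ^ (F i : ℕ)) *
                C (∏ i : Fin k, c (((F i : ℕ) : ℤ) - ((σ i : ℕ) : ℤ)))) :=
          Finset.sum_comm
      _ = ∑ F : Fin k → Fin K, G F := by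
          apply Finset.sum_congr rfl
          intro F _
          rw [hG]
          simp only []
          rw [key_det F, map_sum, Finset.mul_sum]
          apply Finset.sum_congr rfl
          intro σ _
          rw [map_mul, map_intCast]
          ring
  · -- middle = RHS
    set T : Finset (Fin k → ℕ) :=
      (Fintype.piFinset fun _ : Fin k => Finset.range (m + 1)).filter
        (fun d => Monotone d ∧ ∀ i, d i ≤ m) with hT
    have hset : {d : Fin k → ℕ | Monotone d ∧ ∀ i, d i ≤ m + 1 - 1} = (↑T : Set (Fin k → ℕ)) := by
      ext d
      simp only [Set.mem_setOf_eq, hT, Finset.coe_filter, Fintype.mem_piFinset,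
        Finset.mem_range, Set.mem_setOf_eq]
      constructor
      · rintro ⟨h1, h2⟩
        exact ⟨fun i => by have := h2 i; omega, h1, fun i => by have := h2 i; omega⟩
      · rintro ⟨h0, h1, h2⟩
        exact ⟨h1, fun i => by have := h2 i; omega⟩
    have hfin : ∀ σ : Perm (Fin k),
        (∑ᶠ d ∈ {d : Fin k → ℕ | Monotone d ∧ ∀ i, d i ≤ m + 1 - 1},
          ((Equiv.Perm.sign σ : ℤ) : MvPolynomial (Fin k) R) *
            (∏ i : Fin k, X (σ i) ^ (d i + (i : ℕ))) *
            C ((Matrix.of fun i j : Fin k =>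
              c ((d i : ℤ) + ((i : ℕ) : ℤ) - ((j : ℕ) : ℤ))).det))
        = ∑ d ∈ T,
          ((Equiv.Perm.sign σ : ℤ) : MvPolynomial (Fin k) R) *
            (∏ i : Fin k, X (σ i) ^ (d i + (i : ℕ))) *
            C ((Matrix.of fun i j : Fin k =>
              c ((d i : ℤ) + ((i : ℕ) : ℤ) - ((j : ℕ) : ℤ))).det) := by
      intro σ
      rw [hset]
      exact finsum_mem_coe_finset _ _
    rw [Finset.sum_congr rfl (fun σ _ => hfin σ), ← Finset.sum_product']
    have h2 : (∑ F : Fin k → Fin K, G F)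
        = ∑ F ∈ Finset.univ.filter (fun F : Fin k → Fin K => Function.Injective F), G F := by
      symm
      apply Finset.sum_filter_of_ne
      intro F _ hne
      by_contra hinj
      rw [Function.not_injective_iff] at hinj
      obtain ⟨a, b, hab, hne'⟩ := hinj
      apply hne
      have hdet : (Matrix.of fun i j : Fin k =>
          c (((F i : ℕ) : ℤ) - ((j : ℕ) : ℤ))).det = 0 := by
        apply Matrix.det_zero_of_row_eq hne'
        funext j
        simp [hab]
      rw [hG]
      simp only []
      rw [hdet]
      simp
    rw [h2]
    symm
    refine Finset.sum_nbij'
      (i := fun (p : Perm (Fin k) × (Fin k → ℕ)) (j0 : Fin k) =>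
        (⟨(p.2 (p.1⁻¹ j0) + ((p.1⁻¹ j0 : Fin k) : ℕ)) % K, Nat.mod_lt _ hKpos⟩ : Fin K))
      (j := fun (F : Fin k → Fin K) =>
        (Tuple.sort F, fun i : Fin k => (F (Tuple.sort F i) : ℕ) - (i : ℕ)))
      ?_ ?_ ?_ ?_ ?_
    · -- maps into injective functions
      rintro ⟨σ, d⟩ hp
      simp only [Finset.mem_product, Finset.mem_univ, true_and, hT, Finset.mem_filter,
        Fintype.mem_piFinset, Finset.mem_range] at hp
      obtain ⟨_, hd, hdm⟩ := hp
      simp only [Finset.mem_filter, Finset.mem_univ, true_and]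
      intro a b hab
      have hval : ∀ j0 : Fin k, (d (σ⁻¹ j0) + ((σ⁻¹ j0 : Fin k) : ℕ)) % K
          = d (σ⁻¹ j0) + ((σ⁻¹ j0 : Fin k) : ℕ) := by
        intro j0
        apply Nat.mod_eq_of_lt
        have := hdm (σ⁻¹ j0)
        have := (σ⁻¹ j0).isLt
        omega
      have h1 : d (σ⁻¹ a) + ((σ⁻¹ a : Fin k) : ℕ) = d (σ⁻¹ b) + ((σ⁻¹ b : Fin k) : ℕ) := by
        have := congrArg Fin.val hab
        simpa only [Fin.val_mk, hval] using this
      have := (strictmono_shift d hd).injective h1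
      have : σ⁻¹ a = σ⁻¹ b := this
      simpa using congrArg σ this
    · -- inverse maps into product
      intro F hF
      simp only [Finset.mem_filter, Finset.mem_univ, true_and] at hF
      set τ := Tuple.sort F with hτ
      have hmono : Monotone (F ∘ τ) := Tuple.monotone_sort F
      have hsm : StrictMono (fun i : Fin k => ((F (τ i)) : ℕ)) := by
        have : StrictMono (F ∘ τ) :=
          hmono.strictMono_of_injective (hF.comp τ.injective)
        exact fun i j hij => this hij
      have hub : ∀ i : Fin k, ((F (τ i)) : ℕ) ≤ m + (i : ℕ) := by
        intro i
        have hkk : k - 1 < k := by omega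
        have hle := gap_aux _ hsm ((k - 1) - (i : ℕ)) i ⟨k - 1, hkk⟩
          (show (i : ℕ) + ((k - 1) - (i : ℕ)) = k - 1 by have := i.isLt; omega)
        have := (F (τ ⟨k - 1, hkk⟩)).isLt
        have := i.isLt
        omega
      have hlb : ∀ i : Fin k, (i : ℕ) ≤ ((F (τ i)) : ℕ) := by
        intro i
        have h0 : (0 : ℕ) < k := by omega
        have hle := gap_aux _ hsm (i : ℕ) ⟨0, h0⟩ i (by simp)
        omega
      simp only [Finset.mem_product, Finset.mem_univ, true_and, hT, Finset.mem_filter,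
        Fintype.mem_piFinset, Finset.mem_range]
      refine ⟨?_, ?_, ?_⟩
      · intro i
        show ((F (τ i) : ℕ) - (i : ℕ)) < m + 1
        have := hub i
        omega
      · intro i j hij
        show ((F (τ i) : ℕ) - (i : ℕ)) ≤ ((F (τ j) : ℕ) - (j : ℕ))
        have hle := gap_aux _ hsm ((j : ℕ) - (i : ℕ)) i j
          (by have : (i : ℕ) ≤ (j : ℕ) := hij; omega)
        have := hlb i
        omega
      · intro i
        show ((F (τ i) : ℕ) - (i : ℕ)) ≤ m
        have := hub i
        omega
    · -- left inverse
      rintro ⟨σ, d⟩ hp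
      simp only [Finset.mem_product, Finset.mem_univ, true_and, hT, Finset.mem_filter,
        Fintype.mem_piFinset, Finset.mem_range] at hp
      obtain ⟨_, hd, hdm⟩ := hp
      set F : Fin k → Fin K := fun j0 =>
        (⟨(d (σ⁻¹ j0) + ((σ⁻¹ j0 : Fin k) : ℕ)) % K, Nat.mod_lt _ hKpos⟩ : Fin K) with hF
      have hval : ∀ j0 : Fin k, (F j0 : ℕ) = d (σ⁻¹ j0) + ((σ⁻¹ j0 : Fin k) : ℕ) := by
        intro j0
        apply Nat.mod_eq_of_lt
        have := hdm (σ⁻¹ j0)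
        have := (σ⁻¹ j0).isLt
        omega
      have hFσ : ∀ i : Fin k, (F (σ i) : ℕ) = d i + (i : ℕ) := by
        intro i
        rw [hval]
        simp
      have hsort : σ = Tuple.sort F := by
        rw [Tuple.eq_sort_iff]
        constructor
        · intro i j hij
          show F (σ i) ≤ F (σ j)
          rw [Fin.le_def, hFσ, hFσ]
          have h1 : d i ≤ d j := hd hij
          have h2 : (i : ℕ) ≤ (j : ℕ) := hij
          omega
        · intro i j hij heq
          exfalso
          have : d i + (i : ℕ) = d j + (j : ℕ) := by
            rw [← hFσ, ← hFσ, heq]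
          exact (ne_of_lt hij) ((strictmono_shift d hd).injective this)
      refine Prod.ext ?_ ?_
      · exact hsort.symm
      · funext i
        show (F (Tuple.sort F i) : ℕ) - (i : ℕ) = d i
        rw [← hsort, hFσ]
        omega
    · -- right inverse
      intro F hF
      simp only [Finset.mem_filter, Finset.mem_univ, true_and] at hF
      set τ := Tuple.sort F with hτ
      have hmono : Monotone (F ∘ τ) := Tuple.monotone_sort F
      have hsm : StrictMono (fun i : Fin k => ((F (τ i)) : ℕ)) := by
        have : StrictMono (F ∘ τ) :=
          hmono.strictMono_of_injective (hF.comp τ.injective)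
        exact fun i j hij => this hij
      have hlb : ∀ i : Fin k, (i : ℕ) ≤ ((F (τ i)) : ℕ) := by
        intro i
        have h0 : (0 : ℕ) < k := by omega
        have hle := gap_aux _ hsm (i : ℕ) ⟨0, h0⟩ i (by simp)
        omega
      funext j0
      apply Fin.ext
      show (((F (τ (τ⁻¹ j0))) : ℕ) - ((τ⁻¹ j0 : Fin k) : ℕ) + ((τ⁻¹ j0 : Fin k) : ℕ)) % K
          = (F j0 : ℕ)
      have h1 := hlb (τ⁻¹ j0)
      rw [Nat.sub_add_cancel h1]
      rw [show τ (τ⁻¹ j0) = j0 from τ.apply_symm_apply j0]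
      exact Nat.mod_eq_of_lt (F j0).isLt
    · -- terms agree
      rintro ⟨σ, d⟩ hp
      simp only [Finset.mem_product, Finset.mem_univ, true_and, hT, Finset.mem_filter,
        Fintype.mem_piFinset, Finset.mem_range] at hp
      obtain ⟨_, hd, hdm⟩ := hp
      have hval : ∀ j0 : Fin k, (d (σ⁻¹ j0) + ((σ⁻¹ j0 : Fin k) : ℕ)) % K
          = d (σ⁻¹ j0) + ((σ⁻¹ j0 : Fin k) : ℕ) := by
        intro j0
        apply Nat.mod_eq_of_lt
        have := hdm (σ⁻¹ j0)
        have := (σ⁻¹ j0).isLt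
        omega
      have hp1 : (∏ j0 : Fin k, X (R := R) j0 ^ (d (σ⁻¹ j0) + ((σ⁻¹ j0 : Fin k) : ℕ)))
          = ∏ i : Fin k, X (σ i) ^ (d i + (i : ℕ)) := by
        rw [← Equiv.prod_comp σ
          (fun j0 : Fin k => X (R := R) j0 ^ (d (σ⁻¹ j0) + ((σ⁻¹ j0 : Fin k) : ℕ)))]
        apply Finset.prod_congr rfl
        intro i _
        simp
      have hp2 : (Matrix.of fun i j : Fin k =>
            c (((d (σ⁻¹ i) + ((σ⁻¹ i : Fin k) : ℕ) : ℕ) : ℤ) - ((j : ℕ) : ℤ)))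
          = (Matrix.of fun i j : Fin k =>
              c ((d i : ℤ) + ((i : ℕ) : ℤ) - ((j : ℕ) : ℤ))).submatrix (⇑σ⁻¹) id := by
        ext i j
        simp only [Matrix.of_apply, Matrix.submatrix_apply, id_eq]
        congr 1
        all_goals push_cast; ring
      dsimp only
      rw [hG]
      simp only [Fin.val_mk, hval]
      rw [hp1, hp2, Matrix.det_permute, Equiv.Perm.sign_inv, map_mul, map_intCast]
      ring
end

section
/- Let k ≥ 1, let z_1, …, z_k be complex numbers with |z_i| = 1 for all i, and let d_1 < d_2 < ⋯ < d_k be integers. Then | det( z_i^{d_j} )_{1≤i,j≤k} | ≤ ( ∏_{1≤i<j≤k} |z_i − z_j| ) · ( ∏_{1≤i<j≤k} (d_j − d_i) ) / ( ∏_{i=1}^{k} (i−1)! ). Equivalently, | Σ_{σ ∈ S_k} sgn(σ) ∏_{i=1}^k z_i^{d_{σ(i)}} | is bounded by the right-hand side. -/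
open Finset Matrix

lemma key_row {R : Type*} [CommRing R] {n : ℕ} (M : Matrix (Fin (n + 1)) (Fin (n + 1)) R)
    (a : Fin (n + 1) → R) (r : Fin (n + 1))
    (h0 : ∀ j : Fin n, a j.castSucc * M r j.castSucc = a j.succ * M r j.succ) :
    M.det * ∏ j : Fin n, a j.castSucc
      = (-1 : R) ^ ((r : ℕ) + n) * M r (Fin.last n) *
        (Matrix.of fun i j : Fin n =>
          a j.castSucc * M (r.succAbove i) j.castSucc
            - a j.succ * M (r.succAbove i) j.succ).det := by
  classical
  set T : Matrix (Fin (n + 1)) (Fin (n + 1)) R := Matrix.of fun i j =>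
    if j = Fin.last n then (if i = Fin.last n then (1 : R) else 0)
    else if i = j then a j else if (i : ℕ) = (j : ℕ) + 1 then -a i else 0 with hT
  have hTlow : T.BlockTriangular OrderDual.toDual := by
    intro i j hij
    have hij' : (i : ℕ) < (j : ℕ) := OrderDual.toDual_lt_toDual.mp hij
    by_cases hjlast : j = Fin.last n
    · subst hjlast
      have hi : i ≠ Fin.last n := by
        intro h
        subst h
        exact lt_irrefl _ hij'
      simp [hT, hi]
    · have h1 : i ≠ j := by intro h; subst h; omega
      have h2 : ¬ ((i : ℕ) = (j : ℕ) + 1) := by omega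
      simp [hT, hjlast, h1, h2]
  have hTdiag : ∀ i, T i i = if i = Fin.last n then (1 : R) else a i := by
    intro i
    by_cases h : i = Fin.last n <;> simp [hT, h]
  have hdetT : T.det = ∏ j : Fin n, a j.castSucc := by
    rw [Matrix.det_of_lowerTriangular T hTlow]
    rw [Fin.prod_univ_castSucc]
    have h1 : T (Fin.last n) (Fin.last n) = 1 := by rw [hTdiag]; simp
    have h2 : ∀ i : Fin n, T i.castSucc i.castSucc = a i.castSucc := by
      intro i; rw [hTdiag, if_neg (Fin.castSucc_lt_last i).ne]
    simp only [h1, h2, mul_one]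
  have hMT1 : ∀ (i : Fin (n + 1)) (j : Fin n),
      (M * T) i j.castSucc = a j.castSucc * M i j.castSucc - a j.succ * M i j.succ := by
    intro i j
    have hjc : j.castSucc ≠ Fin.last n := (Fin.castSucc_lt_last j).ne
    have hcs : j.castSucc ≠ j.succ := by
      intro h
      have := congrArg Fin.val h
      simp [Fin.val_succ] at this
    have hTc : ∀ l, T l j.castSucc
        = if l = j.castSucc then a j.castSucc else if l = j.succ then -a j.succ else 0 := by
      intro l
      have hcond : ((l : ℕ) = (j : ℕ) + 1) ↔ l = j.succ := by
        rw [Fin.ext_iff, Fin.val_succ]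
      by_cases h1 : l = j.castSucc
      · subst h1
        simp [hT, hjc]
      · by_cases h2 : l = j.succ
        · subst h2
          simp [hT, hjc, h1, hcond]
        · simp [hT, hjc, h1, h2, hcond]
    rw [Matrix.mul_apply]
    rw [Finset.sum_eq_add_of_mem j.castSucc j.succ (Finset.mem_univ _) (Finset.mem_univ _) hcs
      (fun c _ hc => by rw [hTc, if_neg hc.1, if_neg hc.2, mul_zero])]
    rw [hTc, hTc, if_pos rfl, if_neg hcs.symm, if_pos rfl]
    ring
  have hMT2 : ∀ i : Fin (n + 1), (M * T) i (Fin.last n) = M i (Fin.last n) := by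
    intro i
    rw [Matrix.mul_apply]
    have hTl : ∀ l : Fin (n + 1), M i l * T l (Fin.last n)
        = if l = Fin.last n then M i (Fin.last n) else 0 := by
      intro l
      by_cases h : l = Fin.last n <;> simp [hT, h]
    rw [Finset.sum_congr rfl fun l _ => hTl l, Finset.sum_ite_eq' Finset.univ]
    simp
  have hexp := Matrix.det_succ_row (M * T) r
  rw [Finset.sum_eq_single_of_mem (Fin.last n) (Finset.mem_univ _)
    (fun j _ hj => by
      obtain ⟨j', rfl⟩ := Fin.exists_castSucc_eq.mpr hj
      rw [hMT1, h0 j', sub_self, mul_zero, zero_mul])] at hexp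
  have hsub : ((M * T).submatrix r.succAbove (Fin.last n).succAbove) =
      Matrix.of fun i j : Fin n =>
        a j.castSucc * M (r.succAbove i) j.castSucc - a j.succ * M (r.succAbove i) j.succ := by
    ext i j
    simp only [Matrix.submatrix_apply, Fin.succAbove_last, Matrix.of_apply]
    exact hMT1 _ j
  rw [hMT2, hsub, Fin.val_last] at hexp
  calc M.det * ∏ j : Fin n, a j.castSucc = M.det * T.det := by rw [hdetT]
    _ = (M * T).det := (Matrix.det_mul M T).symm
    _ = _ := by rw [hexp]

open Finset Matrix Polynomial

lemma tele_sum {M : Type*} [AddCommGroup M] (g : ℤ → M) {a b : ℤ} (hab : a ≤ b) :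
    ∑ e ∈ Finset.Ico a b, (g e - g (e + 1)) = g a - g b := by
  refine Int.le_induction (motive := fun b _ => ∑ e ∈ Finset.Ico a b, (g e - g (e + 1)) = g a - g b)
    (by simp) (fun b hb ih => ?_) b hab
  have h : Finset.Ico a (b + 1) = insert b (Finset.Ico a b) := by
    ext x
    simp only [Finset.mem_Ico, Finset.mem_insert]
    omega
  rw [h, Finset.sum_insert (by simp)]
  rw [show (∑ e ∈ Finset.Ico a b, (g e - g (e + 1))) = g a - g b from ih]
  abel

lemma zpow_tele (u w : ℂ) (hu : u ≠ 0) (hw : w ≠ 0) {a b : ℤ} (hab : a ≤ b) :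
    ∑ e ∈ Finset.Ico a b, (w - u) * (u ^ e * w ^ (-e))
      = w ^ (1 - a) * u ^ a - w ^ (1 - b) * u ^ b := by
  have h := tele_sum (g := fun e => w ^ (1 - e) * u ^ e) hab
  rw [← h]
  refine Finset.sum_congr rfl fun e _ => ?_
  have h1 : w ^ ((1 : ℤ) - e) = w * w ^ (-e) := by
    rw [sub_eq_add_neg, zpow_add₀ hw, zpow_one]
  have h2 : (1 : ℤ) - (e + 1) = -e := by ring
  have h3 : u ^ (e + 1) = u ^ e * u := by rw [zpow_add_one₀ hu]
  rw [h1, h2, h3]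
  ring

/-- discrete integration of the falling factorial -/
lemma desc_tele (m : ℕ) {a b : ℤ} (hab : a ≤ b) :
    ((m : ℝ) + 1) * ∑ e ∈ Finset.Ico a b, (descPochhammer ℝ m).eval (e : ℝ)
      = (descPochhammer ℝ (m + 1)).eval (b : ℝ) - (descPochhammer ℝ (m + 1)).eval (a : ℝ) := by
  have hstep : ∀ x : ℝ, (descPochhammer ℝ (m + 1)).eval (x + 1)
      - (descPochhammer ℝ (m + 1)).eval x = ((m : ℝ) + 1) * (descPochhammer ℝ m).eval x := by
    intro x
    have h1 : (descPochhammer ℝ (m + 1)).eval (x + 1) = (x + 1) * (descPochhammer ℝ m).eval x := by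
      rw [descPochhammer_succ_left]
      simp [eval_comp]
    have h2 : (descPochhammer ℝ (m + 1)).eval x
        = (descPochhammer ℝ m).eval x * (x - m) := by
      rw [descPochhammer_succ_right]
      simp
    rw [h1, h2]
    ring
  have h := tele_sum (g := fun e => -((descPochhammer ℝ (m + 1)).eval (e : ℝ))) hab
  rw [Finset.mul_sum]
  calc ∑ e ∈ Finset.Ico a b, ((m : ℝ) + 1) * (descPochhammer ℝ m).eval (e : ℝ)
      = ∑ e ∈ Finset.Ico a b, (-((descPochhammer ℝ (m + 1)).eval (e : ℝ))
          - -((descPochhammer ℝ (m + 1)).eval ((e + 1 : ℤ) : ℝ))) := by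
        refine Finset.sum_congr rfl fun e _ => ?_
        push_cast
        rw [← hstep]
        ring
    _ = _ := by rw [h]; ring

lemma hV {m : ℕ} (u : Fin m → ℝ) :
    (Matrix.of fun i j : Fin m => (descPochhammer ℝ (i : ℕ)).eval (u j)).det
      = ∏ i : Fin m, ∏ j ∈ Finset.Ioi i, (u j - u i) := by
  have h := Matrix.det_eval_matrixOfPolynomials_eq_det_vandermonde u
      (fun i : Fin m => descPochhammer ℝ (i : ℕ))
      (fun i => descPochhammer_natDegree (R := ℝ) (i : ℕ)) (fun i => monic_descPochhammer _ _)
  rw [Matrix.det_vandermonde] at h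
  rw [← Matrix.det_transpose, show (Matrix.of fun i j : Fin m =>
    (descPochhammer ℝ (i : ℕ)).eval (u j)).transpose
      = Matrix.of fun i j : Fin m => (descPochhammer ℝ (j : ℕ)).eval (u i) from rfl, ← h]

lemma sumV {n : ℕ} (d : Fin (n + 1) → ℤ) (hd : StrictMono d) :
    (n.factorial : ℝ) *
      ∑ r ∈ Fintype.piFinset (fun j : Fin n => Finset.Ico (d j.castSucc) (d j.succ)),
        ∏ i : Fin n, ∏ j ∈ Finset.Ioi i, ((r j : ℝ) - (r i : ℝ))
      = ∏ i : Fin (n + 1), ∏ j ∈ Finset.Ioi i, ((d j : ℝ) - (d i : ℝ)) := by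
  classical
  set M : Matrix (Fin (n + 1)) (Fin (n + 1)) ℝ :=
    Matrix.of fun i j => (descPochhammer ℝ (i : ℕ)).eval ((d j : ℝ)) with hM
  have h1 : M.det = ∏ i : Fin (n + 1), ∏ j ∈ Finset.Ioi i, ((d j : ℝ) - (d i : ℝ)) := hV _
  have hkey := key_row M (fun _ => (1 : ℝ)) 0 (fun j => by simp [hM])
  simp only [Finset.prod_const_one, mul_one, one_mul, Fin.val_zero, zero_add,
    Fin.succAbove_zero] at hkey
  -- rewrite the inner matrix
  have hIco : ∀ j : Fin n, d j.castSucc ≤ d j.succ := fun j => (hd (Fin.castSucc_lt_succ (i := j))).le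
  have hentry : ∀ (i j : Fin n), M (Fin.succ i) j.castSucc - M (Fin.succ i) j.succ
      = (-(((i : ℕ) : ℝ) + 1)) *
        ∑ e ∈ Finset.Ico (d j.castSucc) (d j.succ), (descPochhammer ℝ (i : ℕ)).eval (e : ℝ) := by
    intro i j
    have := desc_tele (i : ℕ) (hIco j)
    simp only [hM, Matrix.of_apply, Fin.val_succ]
    rw [show (-(((i : ℕ) : ℝ) + 1)) * ∑ e ∈ Finset.Ico (d j.castSucc) (d j.succ),
        (descPochhammer ℝ (i : ℕ)).eval (e : ℝ)
      = -( (((i : ℕ) : ℝ) + 1) * ∑ e ∈ Finset.Ico (d j.castSucc) (d j.succ),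
        (descPochhammer ℝ (i : ℕ)).eval (e : ℝ)) by ring, this]
    ring
  rw [show (Matrix.of fun i j : Fin n => M (Fin.succ i) j.castSucc - M (Fin.succ i) j.succ)
      = Matrix.of fun i j : Fin n => (-(((i : ℕ) : ℝ) + 1)) *
          (Matrix.of fun i j : Fin n => ∑ e ∈ Finset.Ico (d j.castSucc) (d j.succ),
            (descPochhammer ℝ (i : ℕ)).eval (e : ℝ)) i j from by
        ext i j
        simp only [Matrix.of_apply]
        exact hentry i j] at hkey
  rw [Matrix.det_mul_column] at hkey
  have hprodneg : (∏ i : Fin n, (-(((i : ℕ) : ℝ) + 1))) = (-1) ^ n * (n.factorial : ℝ) := by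
    rw [show (fun i : Fin n => (-(((i : ℕ) : ℝ) + 1)))
        = fun i : Fin n => (-1) * (((i : ℕ) : ℝ) + 1) from by funext i; ring]
    rw [Finset.prod_mul_distrib, Finset.prod_const]
    congr 1
    · simp
    · rw [Fin.prod_univ_eq_prod_range (fun i => ((i : ℝ) + 1))]
      norm_cast
      exact Finset.prod_range_add_one_eq_factorial n
  -- expand by multilinearity
  have hmulti : (Matrix.of fun i j : Fin n => ∑ e ∈ Finset.Ico (d j.castSucc) (d j.succ),
        (descPochhammer ℝ (i : ℕ)).eval (e : ℝ)).det
      = ∑ r ∈ Fintype.piFinset (fun j : Fin n => Finset.Ico (d j.castSucc) (d j.succ)),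
          ∏ i : Fin n, ∏ j ∈ Finset.Ioi i, ((r j : ℝ) - (r i : ℝ)) := by
    rw [← Matrix.det_transpose]
    have hrows : (Matrix.of fun i j : Fin n => ∑ e ∈ Finset.Ico (d j.castSucc) (d j.succ),
        (descPochhammer ℝ (i : ℕ)).eval (e : ℝ)).transpose
        = fun j => ∑ e ∈ Finset.Ico (d j.castSucc) (d j.succ),
            (fun i : Fin n => (descPochhammer ℝ (i : ℕ)).eval (e : ℝ)) := by
      funext j i
      simp only [Matrix.transpose_apply, Matrix.of_apply]
      rw [Finset.sum_apply]
    rw [hrows]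
    have := (Matrix.detRowAlternating (R := ℝ) (n := Fin n)).toMultilinearMap.map_sum_finset
      (A := fun j : Fin n => Finset.Ico (d j.castSucc) (d j.succ))
      (g := fun j (e : ℤ) => fun i : Fin n => (descPochhammer ℝ (i : ℕ)).eval (e : ℝ))
    rw [show (Matrix.det (fun j => ∑ e ∈ Finset.Ico (d j.castSucc) (d j.succ),
        fun i : Fin n => (descPochhammer ℝ (i : ℕ)).eval (e : ℝ)))
      = (Matrix.detRowAlternating (R := ℝ) (n := Fin n)).toMultilinearMap
          (fun j => ∑ e ∈ Finset.Ico (d j.castSucc) (d j.succ),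
            fun i : Fin n => (descPochhammer ℝ (i : ℕ)).eval (e : ℝ)) from rfl, this]
    refine Finset.sum_congr rfl fun r _ => ?_
    have : (Matrix.detRowAlternating (R := ℝ) (n := Fin n)).toMultilinearMap
        (fun j => fun i : Fin n => (descPochhammer ℝ (i : ℕ)).eval ((r j : ℝ)))
        = (Matrix.of fun j i : Fin n =>
            (descPochhammer ℝ (i : ℕ)).eval ((r j : ℝ))).det := rfl
    rw [this, ← Matrix.det_transpose]
    rw [show (Matrix.of fun j i : Fin n => (descPochhammer ℝ (i : ℕ)).eval ((r j : ℝ))).transpose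
      = Matrix.of fun i j : Fin n => (descPochhammer ℝ (i : ℕ)).eval ((r j : ℝ)) from rfl]
    exact hV _
  rw [hmulti, hprodneg] at hkey
  have hlast : M 0 (Fin.last n) = 1 := by simp [hM]
  rw [hlast, h1] at hkey
  have hsq : ((-1 : ℝ)) ^ n * (-1) ^ n = 1 := by
    rw [← pow_add]
    exact Even.neg_one_pow ⟨n, rfl⟩
  rw [hkey, show ∀ S : ℝ, (-1 : ℝ) ^ n * 1 * ((-1) ^ n * (n.factorial : ℝ) * S)
      = ((-1 : ℝ) ^ n * (-1) ^ n) * ((n.factorial : ℝ) * S) from fun S => by ring, hsq, one_mul]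

open Finset Matrix

lemma prod_Ioi_split {M : Type*} [CommMonoid M] (n : ℕ) (f : Fin (n + 1) → Fin (n + 1) → M) :
    ∏ i : Fin (n + 1), ∏ j ∈ Finset.Ioi i, f i j
      = (∏ i : Fin n, ∏ j ∈ Finset.Ioi i, f i.castSucc j.castSucc) *
          ∏ i : Fin n, f i.castSucc (Fin.last n) := by
  rw [Fin.prod_univ_castSucc]
  have hlast : ∏ j ∈ Finset.Ioi (Fin.last n), f (Fin.last n) j = 1 := by
    have : Finset.Ioi (Fin.last n) = ∅ := by
      ext x
      simp only [Finset.mem_Ioi, Finset.notMem_empty, iff_false, not_lt]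
      exact Fin.le_last x
    rw [this, Finset.prod_empty]
  rw [hlast, mul_one, ← Finset.prod_mul_distrib]
  refine Finset.prod_congr rfl fun i _ => ?_
  have hIoi : Finset.Ioi (i.castSucc) = insert (Fin.last n)
      ((Finset.Ioi i).map Fin.castSuccEmb) := by
    ext x
    simp only [Finset.mem_Ioi, Finset.mem_insert, Finset.mem_map, Fin.castSuccEmb,
      Function.Embedding.coeFn_mk]
    constructor
    · intro hx
      rcases Fin.eq_castSucc_or_eq_last x with ⟨x', rfl⟩ | rfl
      · right
        exact ⟨x', by simpa [Fin.castSucc_lt_castSucc_iff] using hx, rfl⟩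
      · left; rfl
    · rintro (rfl | ⟨x', hx', rfl⟩)
      · exact Fin.castSucc_lt_last i
      · exact Fin.castSucc_lt_castSucc_iff.mpr hx'
  rw [hIoi, Finset.prod_insert (by
      simp only [Finset.mem_map]
      rintro ⟨x', _, hx'⟩
      exact absurd hx' (Fin.castSucc_lt_last x').ne), Finset.prod_map]
  simp only [Fin.castSuccEmb, Fin.castAddEmb]
  rw [mul_comm]
  rfl
lemma main_aux : ∀ (k : ℕ) (z : Fin k → ℂ) (d : Fin k → ℤ),
    (∀ i, ‖z i‖ = 1) → StrictMono d →
    ‖Matrix.det (Matrix.of fun i j : Fin k => z i ^ d j)‖ *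
        ∏ i : Fin k, ((i : ℕ).factorial : ℝ)
      ≤ (∏ i : Fin k, ∏ j ∈ Finset.Ioi i, ‖z i - z j‖) *
          ∏ i : Fin k, ∏ j ∈ Finset.Ioi i, ((d j : ℝ) - (d i : ℝ)) := by
  intro k
  induction k with
  | zero =>
      intro z d hz hd
      simp [Matrix.det_fin_zero]
  | succ n ih =>
      intro z d hz hd
      classical
      set w : ℂ := z (Fin.last n) with hw_def
      have hz0 : ∀ i, z i ≠ 0 := by
        intro i h
        have := hz i
        rw [h] at this
        simp at this
      have hw : w ≠ 0 := hz0 _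
      have habs_w : ∀ t : ℤ, ‖w ^ t‖ = 1 := by
        intro t
        rw [norm_zpow, hz, _root_.one_zpow]
      set M : Matrix (Fin (n + 1)) (Fin (n + 1)) ℂ := Matrix.of fun i j => z i ^ d j with hM
      have hcancel : ∀ t : ℤ, w ^ ((1 : ℤ) - t) * w ^ t = w := by
        intro t
        rw [← zpow_add₀ hw]
        norm_num
      have hkey := key_row M (fun j => w ^ ((1 : ℤ) - d j)) (Fin.last n)
        (fun j => by simp only [hM, Matrix.of_apply]; rw [hcancel, hcancel])
      -- the inner n × n matrix
      set D : Matrix (Fin n) (Fin n) ℂ := Matrix.of fun i j : Fin n =>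
        w ^ ((1 : ℤ) - d j.castSucc) * M ((Fin.last n).succAbove i) j.castSucc
          - w ^ ((1 : ℤ) - d j.succ) * M ((Fin.last n).succAbove i) j.succ with hD
      -- |det M| = |det D|
      have habs : ‖M.det‖ = ‖D.det‖ := by
        have h1 := congrArg norm hkey
        rw [norm_mul, norm_mul, norm_mul, norm_prod] at h1
        simp only [habs_w, Finset.prod_const_one, mul_one] at h1
        rw [h1]
        have h2 : ‖(-1 : ℂ) ^ ((Fin.last n : ℕ) + n)‖ = 1 := by
          rw [norm_pow]
          simp
        rw [h2, one_mul]
        have h3 : ‖M (Fin.last n) (Fin.last n)‖ = 1 := by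
          simp only [hM, Matrix.of_apply]
          rw [norm_zpow, hz, _root_.one_zpow]
        rw [h3, one_mul]
      -- D entries as telescoping sums
      have hIco : ∀ j : Fin n, d j.castSucc ≤ d j.succ := fun j => (hd (Fin.castSucc_lt_succ (i := j))).le
      have hDentry : ∀ i j : Fin n, D i j
          = ∑ e ∈ Finset.Ico (d j.castSucc) (d j.succ),
              (w - z i.castSucc) * (z i.castSucc ^ e * w ^ (-e)) := by
        intro i j
        rw [zpow_tele (z i.castSucc) w (hz0 _) hw (hIco j)]
        simp only [hD, hM, Matrix.of_apply, Fin.succAbove_last_apply]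
      -- expand det D by multilinearity over its columns
      set E : Fin n → Finset ℤ := fun j => Finset.Ico (d j.castSucc) (d j.succ) with hE
      have hmulti : D.det = ∑ r ∈ Fintype.piFinset E,
          (Matrix.of fun j i : Fin n =>
            (w - z i.castSucc) * (z i.castSucc ^ (r j) * w ^ (-(r j)))).det := by
        rw [← Matrix.det_transpose]
        have hrows : D.transpose = fun j => ∑ e ∈ E j,
            (fun i : Fin n => (w - z i.castSucc) * (z i.castSucc ^ e * w ^ (-e))) := by
          funext j i
          simp only [Matrix.transpose_apply]
          rw [hDentry i j, Finset.sum_apply]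
        rw [hrows]
        have h := (Matrix.detRowAlternating (R := ℂ) (n := Fin n)).toMultilinearMap.map_sum_finset
          (A := E)
          (g := fun j (e : ℤ) => fun i : Fin n =>
            (w - z i.castSucc) * (z i.castSucc ^ e * w ^ (-e)))
        rw [show (Matrix.det (fun j => ∑ e ∈ E j,
            fun i : Fin n => (w - z i.castSucc) * (z i.castSucc ^ e * w ^ (-e))))
          = (Matrix.detRowAlternating (R := ℂ) (n := Fin n)).toMultilinearMap
              (fun j => ∑ e ∈ E j,
                fun i : Fin n => (w - z i.castSucc) * (z i.castSucc ^ e * w ^ (-e))) from rfl, h]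
        rfl
      -- per-term factorization
      have hterm : ∀ r : Fin n → ℤ,
          (Matrix.of fun j i : Fin n =>
            (w - z i.castSucc) * (z i.castSucc ^ (r j) * w ^ (-(r j)))).det
          = (∏ j : Fin n, w ^ (-(r j))) * ((∏ i : Fin n, (w - z i.castSucc)) *
              (Matrix.of fun i j : Fin n => z i.castSucc ^ (r j)).det) := by
        intro r
        rw [show (Matrix.of fun j i : Fin n =>
            (w - z i.castSucc) * (z i.castSucc ^ (r j) * w ^ (-(r j))))
          = Matrix.of fun j i : Fin n => (w ^ (-(r j))) *
              ((Matrix.of fun j i : Fin n => (w - z i.castSucc) * z i.castSucc ^ (r j)) j i) from by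
            ext j i
            simp only [Matrix.of_apply]
            ring]
        rw [Matrix.det_mul_column]
        congr 1
        rw [show (Matrix.of fun j i : Fin n => (w - z i.castSucc) * z i.castSucc ^ (r j))
          = Matrix.of fun j i : Fin n => (fun i : Fin n => w - z i.castSucc) i *
              ((Matrix.of fun j i : Fin n => z i.castSucc ^ (r j)) j i) from rfl]
        rw [Matrix.det_mul_row]
        congr 1
        rw [← Matrix.det_transpose]
        rfl
      -- the bound
      have hbound : ‖D.det‖ ≤ (∏ i : Fin n, ‖w - z i.castSucc‖) *
          ∑ r ∈ Fintype.piFinset E,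
            ‖(Matrix.of fun i j : Fin n => z i.castSucc ^ (r j)).det‖ := by
        rw [hmulti]
        refine le_trans (norm_sum_le _ _) ?_
        rw [Finset.mul_sum]
        refine Finset.sum_le_sum fun r _ => ?_
        rw [hterm r, norm_mul, norm_mul, norm_prod, norm_prod]
        have h1 : ∀ j : Fin n, ‖w ^ (-(r j))‖ = 1 := fun j => habs_w _
        simp only [h1, Finset.prod_const_one, one_mul]
        exact le_rfl
      -- strict monotonicity of each r
      have hr_mono : ∀ r ∈ Fintype.piFinset E, StrictMono r := by
        intro r hr
        rw [Fintype.mem_piFinset] at hr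
        intro p q hpq
        have h1 := (Finset.mem_Ico.mp (hr p)).2
        have h2 := (Finset.mem_Ico.mp (hr q)).1
        have h3 : d p.succ ≤ d q.castSucc := hd.monotone (by
          rw [Fin.le_def, Fin.val_succ, Fin.coe_castSucc]
          exact hpq)
        omega
      have hIH : ∀ r ∈ Fintype.piFinset E,
          ‖(Matrix.of fun i j : Fin n => z i.castSucc ^ (r j)).det‖ *
            ∏ i : Fin n, ((i : ℕ).factorial : ℝ)
          ≤ (∏ i : Fin n, ∏ j ∈ Finset.Ioi i, ‖z i.castSucc - z j.castSucc‖) *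
              ∏ i : Fin n, ∏ j ∈ Finset.Ioi i, ((r j : ℝ) - (r i : ℝ)) :=
        fun r hr => ih (fun i => z i.castSucc) r (fun i => hz _) (hr_mono r hr)
      set F : ℝ := ∏ i : Fin n, ((i : ℕ).factorial : ℝ) with hF
      set S : ℝ := ∑ r ∈ Fintype.piFinset E,
        ∏ i : Fin n, ∏ j ∈ Finset.Ioi i, ((r j : ℝ) - (r i : ℝ)) with hS
      set Sd : ℝ := ∑ r ∈ Fintype.piFinset E,
        ‖(Matrix.of fun i j : Fin n => z i.castSucc ^ (r j)).det‖ with hSd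
      set P : ℝ := ∏ i : Fin n, ‖w - z i.castSucc‖ with hP
      set VZ' : ℝ := ∏ i : Fin n, ∏ j ∈ Finset.Ioi i,
        ‖z i.castSucc - z j.castSucc‖ with hVZ'
      have hsumV : (n.factorial : ℝ) * S
          = ∏ i : Fin (n + 1), ∏ j ∈ Finset.Ioi i, ((d j : ℝ) - (d i : ℝ)) := by
        rw [hS]
        simp only [hE]
        exact sumV d hd
      have hFsplit : (∏ i : Fin (n + 1), ((i : ℕ).factorial : ℝ)) = F * (n.factorial : ℝ) := by
        rw [Fin.prod_univ_castSucc, hF]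
        simp
      have hVZsplit : (∏ i : Fin (n + 1), ∏ j ∈ Finset.Ioi i, ‖z i - z j‖)
          = VZ' * P := by
        rw [prod_Ioi_split n (fun i j => ‖z i - z j‖), hVZ', hP]
        congr 1
        refine Finset.prod_congr rfl fun i _ => ?_
        rw [norm_sub_rev]
      -- nonnegativity facts
      have hP0 : 0 ≤ P := Finset.prod_nonneg fun i _ => norm_nonneg _
      have hF0 : 0 ≤ F := Finset.prod_nonneg fun i _ => by positivity
      have hfact0 : (0 : ℝ) ≤ (n.factorial : ℝ) := by positivity
      have hVZ'0 : 0 ≤ VZ' :=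
        Finset.prod_nonneg fun i _ => Finset.prod_nonneg fun j _ => norm_nonneg _
      -- final chain
      rw [hFsplit, hVZsplit, ← hsumV]
      calc ‖M.det‖ * (F * (n.factorial : ℝ))
          ≤ (P * Sd) * (F * (n.factorial : ℝ)) := by
            refine mul_le_mul_of_nonneg_right ?_ (mul_nonneg hF0 hfact0)
            rw [habs]
            exact hbound
        _ = (P * (n.factorial : ℝ)) * (Sd * F) := by ring
        _ ≤ (P * (n.factorial : ℝ)) * (VZ' * S) := by
            refine mul_le_mul_of_nonneg_left ?_ (mul_nonneg hP0 hfact0)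
            rw [hSd, hS, Finset.sum_mul, Finset.mul_sum]
            exact Finset.sum_le_sum hIH
        _ = VZ' * P * ((n.factorial : ℝ) * S) := by ring

/-- for unimodular `z_1, …, z_k` and integers `d_1 < ⋯ < d_k`,
`|det(z_i^{d_j})| ≤ (∏_{i<j} |z_i - z_j|) (∏_{i<j} (d_j - d_i)) / ∏_i (i-1)!`
(the Weyl character/dimension bound). -/
theorem statement13 (k : ℕ) (hk : 1 ≤ k) (z : Fin k → ℂ)
    (hz : ∀ i, ‖z i‖ = 1) (d : Fin k → ℤ) (hd : StrictMono d) :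
    ‖Matrix.det (Matrix.of fun i j : Fin k => z i ^ d j)‖ ≤
      (∏ i : Fin k, ∏ j ∈ Finset.Ioi i, ‖z i - z j‖) *
        (∏ i : Fin k, ∏ j ∈ Finset.Ioi i, ((d j - d i : ℤ) : ℝ)) /
        ∏ i : Fin k, ((i : ℕ).factorial : ℝ) := by
  have h := main_aux k z d hz hd
  have hpos : 0 < ∏ i : Fin k, ((i : ℕ).factorial : ℝ) :=
    Finset.prod_pos fun i _ => by positivity
  rw [le_div_iff₀ hpos]
  have hcast : (∏ i : Fin k, ∏ j ∈ Finset.Ioi i, ((d j - d i : ℤ) : ℝ))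
      = ∏ i : Fin k, ∏ j ∈ Finset.Ioi i, ((d j : ℝ) - (d i : ℝ)) := by
    push_cast
    rfl
  rw [hcast]
  exact h
end

section
/- Let e_1, e_2, e_3, e_4 be natural numbers with e_1 + e_2 = e_3 + e_4. Then the number of quadruples (a, b, c, d) of natural numbers with a + b = e_1, c + d = e_2, a + c = e_3, and b + d = e_4 equals min(e_1, e_2, e_3, e_4) + 1. -/
/-- for natural numbers with `e₁ + e₂ = e₃ + e₄`, the number of
quadruples `(a,b,c,d)` of naturals with `a+b = e₁`, `c+d = e₂`, `a+c = e₃`,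
`b+d = e₄` is `min(e₁,e₂,e₃,e₄) + 1`. -/
theorem statement15 (e₁ e₂ e₃ e₄ : ℕ) (h : e₁ + e₂ = e₃ + e₄) :
    Set.ncard {x : ℕ × ℕ × ℕ × ℕ |
        x.1 + x.2.1 = e₁ ∧ x.2.2.1 + x.2.2.2 = e₂ ∧
        x.1 + x.2.2.1 = e₃ ∧ x.2.1 + x.2.2.2 = e₄} =
      min (min e₁ e₂) (min e₃ e₄) + 1 := by
  have hset : {x : ℕ × ℕ × ℕ × ℕ |
        x.1 + x.2.1 = e₁ ∧ x.2.2.1 + x.2.2.2 = e₂ ∧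
        x.1 + x.2.2.1 = e₃ ∧ x.2.1 + x.2.2.2 = e₄} =
      (fun a => (a, e₁ - a, e₃ - a, e₂ - (e₃ - a))) ''
        (Set.Icc (e₃ - e₂) (min e₁ e₃)) := by
    ext ⟨a, b, c, d⟩
    simp only [Set.mem_setOf_eq, Set.mem_image, Set.mem_Icc, Prod.mk.injEq]
    constructor
    · rintro ⟨h1, h2, h3, h4⟩
      exact ⟨a, ⟨by omega, by omega⟩, rfl, by omega, by omega, by omega⟩
    · rintro ⟨a', ⟨hL, hU⟩, rfl, rfl, rfl, rfl⟩
      refine ⟨by omega, by omega, by omega, by omega⟩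
  rw [hset, Set.ncard_image_of_injOn (fun x _ y _ hxy => by
    simpa using congrArg Prod.fst hxy), ← Finset.coe_Icc,
    Set.ncard_coe_finset, Nat.card_Icc]
  omega
end
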